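/- (Theorem 2, (3) ⇒ (1)) Let X ⊆ ℝ² be a finite set in general position with exactly k convex layers that admits a nested labeling ψ which is both an internal separation and an external separation. Then X is a nested almost convex set. -/

import Mathlib

open Set

noncomputable section

/-- Points of the plane. -/
abbrev Pt : Type := ℝ × ℝ

/-- The orientation determinant of the triple `(a, b, c)`:
`c` lies strictly to the left of the directed line from `a` to `b` iff `orient a b c > 0`. -/
def orient (a b c : Pt) : ℝ :=
  (b.1 - a.1) * (c.2 - a.2) - (b.2 - a.2) * (c.1 - a.1)

/-- A set of points is in general position if no three pairwise distinct points are collinear. -/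
def GenPos (X : Set Pt) : Prop :=
  ∀ a ∈ X, ∀ b ∈ X, ∀ c ∈ X, a ≠ b → a ≠ c → b ≠ c → orient a b c ≠ 0

/-- The set of extreme points of the convex hull of `S`. -/
def extremePts (S : Set Pt) : Set Pt := Set.extremePoints ℝ (convexHull ℝ S)

/-- Remove the extreme points of the convex hull (one peeling step of convex layers). -/
def peel (S : Set Pt) : Set Pt := S \ extremePts S

/-- `X` has exactly `k` convex layers. -/
def HasLayers (X : Set Pt) (k : ℕ) : Prop :=
  peel^[k] X = ∅ ∧ ∀ j < k, peel^[j] X ≠ ∅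

/-- `X_j`, the union of the `j` innermost convex layers (when `X` has `k` layers). -/
def layerSub (X : Set Pt) (k j : ℕ) : Set Pt := peel^[k - j] X

/-- `R_j`, the `j`-th convex layer of `X` (when `X` has `k` layers), `R_1` innermost. -/
def layer (X : Set Pt) (k j : ℕ) : Set Pt := extremePts (layerSub X k j)

/-- `X` is a nested almost convex set. -/
def IsNACS (X : Set Pt) : Prop :=
  X.Finite ∧ X.Nonempty ∧ GenPos X ∧
  ∀ k, HasLayers X k →
    ∀ j, 1 ≤ j → j ≤ k →
      ∀ a ∈ layer X k j, ∀ b ∈ layer X k j, ∀ c ∈ layer X k j,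
        a ≠ b → a ≠ c → b ≠ c →
        ∃! p : Pt, p ∈ layerSub X k (j - 1) ∩ interior (convexHull ℝ ({a, b, c} : Set Pt))

/-- `q` is a counterclockwise enumeration of `S`. -/
def CCWEnum {m : ℕ} (S : Set Pt) (q : Fin m → Pt) : Prop :=
  Function.Injective q ∧ Set.range q = S ∧
  ∀ a b c : Fin m, a < b → b < c → 0 < orient (q a) (q b) (q c)

/-- The ordered pair `(q1, q2)` of points of `R` is adoptable from `p`. -/
def AdoptablePair (R : Set Pt) (p q1 q2 : Pt) : Prop :=
  ∀ q3 ∈ R \ ({q1, q2} : Set Pt), p ∈ interior (convexHull ℝ ({q1, q2, q3} : Set Pt))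

/-- The `i`-th binary string of length `j` in lexicographic order (`false` before `true`). -/
def strOfNat (j i : ℕ) : List Bool :=
  (List.range j).map fun t => i.testBit (j - 1 - t)

/-- The numeric (lexicographic) rank of a binary string among strings of its length. -/
def natOfStr (s : List Bool) : ℕ := s.foldl (fun n b => 2 * n + b.toNat) 0

/-- The leftmost `k`-level descendant of the node `s`. -/
def firstStr (k : ℕ) (s : List Bool) : List Bool := s ++ List.replicate (k - s.length) false

/-- The rightmost `k`-level descendant of the node `s`. -/
def lastStr (k : ℕ) (s : List Bool) : List Bool := s ++ List.replicate (k - s.length) true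

/-- Non-root nodes of the tree `T₁(k)`: binary strings of length `1..k`. -/
def ValidNode1 (k : ℕ) (s : List Bool) : Prop := 1 ≤ s.length ∧ s.length ≤ k

/-- A type-1 labeling of `X`, given by its label function `x` (the inverse of `ψ`). -/
def IsLabeling1 (k : ℕ) (X : Set Pt) (x : List Bool → Pt) : Prop :=
  Set.InjOn x {s | ValidNode1 k s} ∧ x '' {s | ValidNode1 k s} = X

/-- A type-1 labeling is nested. -/
def Nested1 (k : ℕ) (X : Set Pt) (x : List Bool → Pt) : Prop :=
  ∀ j, 1 ≤ j → j ≤ k →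
    CCWEnum (layer X k j) fun i : Fin (2 ^ j) => x (strOfNat j i.val)

/-- A type-1 labeling is adoptable. -/
def Adoptable1 (k : ℕ) (X : Set Pt) (x : List Bool → Pt) : Prop :=
  ∀ s : List Bool, 1 ≤ s.length → s.length + 1 ≤ k →
    AdoptablePair (layer X k (s.length + 1)) (x s) (x (s ++ [false])) (x (s ++ [true]))

/-- `previous[R_k(u)]` for a type-1 labeling: the cyclic predecessor (in the left-to-right,
i.e. counterclockwise, order of the `k`-level) of `first[R_k(u)]`. -/
def prev1 (k : ℕ) (x : List Bool → Pt) (s : List Bool) : Pt :=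
  x (strOfNat k ((natOfStr (firstStr k s) + (2 ^ k - 1)) % 2 ^ k))

/-- `next[R_k(u)]` for a type-1 labeling: the cyclic successor of `last[R_k(u)]`. -/
def next1 (k : ℕ) (x : List Bool → Pt) (s : List Bool) : Pt :=
  x (strOfNat k ((natOfStr (lastStr k s) + 1) % 2 ^ k))

/-- A type-1 labeling is well laid. -/
def WellLaid1 (k : ℕ) (x : List Bool → Pt) : Prop :=
  ∀ s : List Bool, 1 ≤ s.length → s.length ≤ k →
    x s ∈ convexHull ℝ ({prev1 k x s, x (firstStr k s), x (lastStr k s)} : Set Pt) ∧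
    x s ∈ convexHull ℝ ({x (firstStr k s), x (lastStr k s), next1 k x s} : Set Pt)

/-- `X_u` for a type-1 labeling: the labels of the proper descendants of `s`. -/
def descSet1 (k : ℕ) (x : List Bool → Pt) (s : List Bool) : Set Pt :=
  x '' {t | ValidNode1 k t ∧ s <+: t ∧ s ≠ t}

/-- `X̄_u = X_u ∪ {x_u}` for a type-1 labeling. -/
def barSet1 (k : ℕ) (x : List Bool → Pt) (s : List Bool) : Set Pt :=
  insert (x s) (descSet1 k x s)

/-- A type-1 labeling is an internal separation. -/
def InternalSep1 (k : ℕ) (X : Set Pt) (x : List Bool → Pt) : Prop :=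
  ∀ s : List Bool, s.length + 1 ≤ k →
    ∀ y ∈ X \ descSet1 k x s,
      ∀ a ∈ barSet1 k x (s ++ [false]), ∀ b ∈ barSet1 k x (s ++ [true]),
        0 < orient a b y

/-- A type-1 labeling is an external separation. -/
def ExternalSep1 (k : ℕ) (X : Set Pt) (x : List Bool → Pt) : Prop :=
  ∀ s : List Bool, 1 ≤ s.length → s.length + 1 ≤ k →
    ∀ y ∈ X \ barSet1 k x s,
      (∀ a ∈ barSet1 k x (s ++ [false]), 0 < orient a (x s) y) ∧
      (∀ b ∈ barSet1 k x (s ++ [true]), 0 < orient (x s) b y)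

/-- Nodes of the tree `T₂(k)`: the root `none`, and pairs `(c, s)`. -/
abbrev Node2 : Type := Option (Fin 3 × List Bool)

/-- Valid nodes of `T₂(k)`: the root, and pairs `(c, s)` with `|s| ≤ k - 2`. -/
def ValidNode2 (k : ℕ) : Node2 → Prop
  | none => True
  | some (_, s) => s.length + 2 ≤ k

/-- A type-2 labeling of `X`, given by its label function `x` (the inverse of `ψ`). -/
def IsLabeling2 (k : ℕ) (X : Set Pt) (x : Node2 → Pt) : Prop :=
  Set.InjOn x {u | ValidNode2 k u} ∧ x '' {u | ValidNode2 k u} = X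

/-- The `i`-th node (left-to-right) of the `(j+2)`-level of `T₂(k)`. -/
def node2At (j i : ℕ) : Node2 :=
  some (⟨i / 2 ^ j % 3, by omega⟩, strOfNat j (i % 2 ^ j))

/-- A type-2 labeling is nested. -/
def Nested2 (k : ℕ) (X : Set Pt) (x : Node2 → Pt) : Prop :=
  CCWEnum (layer X k 1) (fun _ : Fin 1 => x none) ∧
  ∀ j : ℕ, j + 2 ≤ k →
    CCWEnum (layer X k (j + 2)) fun i : Fin (3 * 2 ^ j) => x (node2At j i.val)

/-- A type-2 labeling is adoptable. -/
def Adoptable2 (k : ℕ) (X : Set Pt) (x : Node2 → Pt) : Prop :=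
  ∀ (c : Fin 3) (s : List Bool), s.length + 3 ≤ k →
    AdoptablePair (layer X k (s.length + 3)) (x (some (c, s)))
      (x (some (c, s ++ [false]))) (x (some (c, s ++ [true])))

/-- `previous[R_k(u)]` for a type-2 labeling, `u = (c, s)`. -/
def prev2 (k : ℕ) (x : Node2 → Pt) (c : Fin 3) (s : List Bool) : Pt :=
  x (node2At (k - 2)
      ((c.val * 2 ^ (k - 2) + natOfStr (firstStr (k - 2) s) + (3 * 2 ^ (k - 2) - 1)) %
        (3 * 2 ^ (k - 2))))

/-- `next[R_k(u)]` for a type-2 labeling, `u = (c, s)`. -/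
def next2 (k : ℕ) (x : Node2 → Pt) (c : Fin 3) (s : List Bool) : Pt :=
  x (node2At (k - 2)
      ((c.val * 2 ^ (k - 2) + natOfStr (lastStr (k - 2) s) + 1) % (3 * 2 ^ (k - 2))))

/-- A type-2 labeling is well laid (the root is the only node with `R_k(u) = R_k`). -/
def WellLaid2 (k : ℕ) (x : Node2 → Pt) : Prop :=
  ∀ (c : Fin 3) (s : List Bool), s.length + 2 ≤ k →
    x (some (c, s)) ∈ convexHull ℝ
      ({prev2 k x c s, x (some (c, firstStr (k - 2) s)),
        x (some (c, lastStr (k - 2) s))} : Set Pt) ∧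
    x (some (c, s)) ∈ convexHull ℝ
      ({x (some (c, firstStr (k - 2) s)), x (some (c, lastStr (k - 2) s)),
        next2 k x c s} : Set Pt)

/-- `X_u` for a type-2 labeling and a non-root node `u = (c, s)`. -/
def descSet2 (k : ℕ) (x : Node2 → Pt) (c : Fin 3) (s : List Bool) : Set Pt :=
  x '' {u | ∃ t : List Bool, u = some (c, t) ∧ t.length + 2 ≤ k ∧ s <+: t ∧ s ≠ t}

/-- `X̄_u = X_u ∪ {x_u}` for a type-2 labeling and a non-root node `u = (c, s)`. -/
def barSet2 (k : ℕ) (x : Node2 → Pt) (c : Fin 3) (s : List Bool) : Set Pt :=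
  insert (x (some (c, s))) (descSet2 k x c s)

/-- A type-2 labeling is an internal separation. -/
def InternalSep2 (k : ℕ) (X : Set Pt) (x : Node2 → Pt) : Prop :=
  (∀ (c : Fin 3) (s : List Bool), s.length + 3 ≤ k →
    ∀ y ∈ X \ descSet2 k x c s,
      ∀ a ∈ barSet2 k x c (s ++ [false]), ∀ b ∈ barSet2 k x c (s ++ [true]),
        0 < orient a b y) ∧
  (∀ i : Fin 3,
    ∀ y ∈ X \ (barSet2 k x i [] ∪ barSet2 k x (i + 1) []),
      ∀ a ∈ barSet2 k x i [], ∀ b ∈ barSet2 k x (i + 1) [],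
        0 < orient a b y)

/-- A type-2 labeling is an external separation. -/
def ExternalSep2 (k : ℕ) (X : Set Pt) (x : Node2 → Pt) : Prop :=
  ∀ (c : Fin 3) (s : List Bool), s.length + 3 ≤ k →
    ∀ y ∈ X \ barSet2 k x c s,
      (∀ a ∈ barSet2 k x c (s ++ [false]), 0 < orient a (x (some (c, s))) y) ∧
      (∀ b ∈ barSet2 k x c (s ++ [true]), 0 < orient (x (some (c, s))) b y)

/-- One corner-refinement step: from `α_s = (q, o, p)` to `α_{s0}` (for `b = false`)
or `α_{s1}` (for `b = true`). -/
def cornerStep (α : Pt × Pt × Pt) (b : Bool) : Pt × Pt × Pt :=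
  let q := α.1
  let o := α.2.1
  let p := α.2.2
  if b then (o + (1 / 5 : ℝ) • (q - o), o + (1 / 5 : ℝ) • (p - o), o + (2 / 5 : ℝ) • (p - o))
  else (o + (2 / 5 : ℝ) • (q - o), o + (1 / 5 : ℝ) • (q - o), o + (1 / 5 : ℝ) • (p - o))

/-- The corner `α_s = (q_s, o_s, p_s)` assigned to the binary string `s` (with parameter `k`). -/
def corner (k : ℕ) (s : List Bool) : Pt × Pt × Pt :=
  s.foldl cornerStep
    (((0 : ℝ), (2 * 5 ^ (k + 1) : ℝ)), ((0 : ℝ), (0 : ℝ)), ((2 * 5 ^ (k + 1) : ℝ), (0 : ℝ)))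

/-- The point `y_v` for a binary string `v = s ++ [b]` of positive length. -/
def ypt (k : ℕ) (v : List Bool) : Pt :=
  let α := corner k v.dropLast
  if v.getLastD false then α.2.1 + (1 / 5 : ℝ) • (α.2.2 - α.2.1)
  else α.2.1 + (1 / 5 : ℝ) • (α.1 - α.2.1)

/-- The point `x_s`: the midpoint of `y_{s·0^(k+1−|s|)}` and `y_{s·1^(k+1−|s|)}`. -/
def xpt (k : ℕ) (s : List Bool) : Pt :=
  (1 / 2 : ℝ) •
    (ypt k (s ++ List.replicate (k + 1 - s.length) false) +
      ypt k (s ++ List.replicate (k + 1 - s.length) true))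



section AUX

lemma orient_cycle (a b c : Pt) : orient a b c = orient b c a := by simp only [orient]; ring
lemma orient_rev (a b c : Pt) : orient a b c = - orient b a c := by simp only [orient]; ring

lemma convexHull_orient_nonneg {a b c : Pt} (h : 0 ≤ orient a b c) :
    convexHull ℝ ({a,b,c} : Set Pt) ⊆ {p | 0 ≤ orient a b p} := by
  have hlin : IsLinearMap ℝ (fun p : Pt => (b.1 - a.1) * p.2 - (b.2 - a.2) * p.1) := by
    constructor
    · intro p q; simp [Prod.fst_add, Prod.snd_add]; ring
    · intro r p; simp [Prod.smul_fst, Prod.smul_snd, smul_eq_mul]; ring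
  have hconv : Convex ℝ {p : Pt | 0 ≤ orient a b p} := by
    have h2 := convex_halfSpace_ge hlin ((b.1 - a.1) * a.2 - (b.2 - a.2) * a.1)
    suffices hs : {p : Pt | 0 ≤ orient a b p} = {w : Pt | (b.1 - a.1) * a.2 - (b.2 - a.2) * a.1 ≤ (b.1 - a.1) * w.2 - (b.2 - a.2) * w.1} by rw [hs]; exact h2
    ext p
    simp only [Set.mem_setOf_eq, orient]
    constructor <;> intro hh <;> nlinarith
  apply convexHull_min _ hconv
  rintro p (rfl|rfl|rfl)
  · simp [orient]
  · simp only [Set.mem_setOf_eq, orient]; ring_nf; exact le_refl _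
  · exact h

lemma interior_orient_pos {a b c : Pt} (hne : a ≠ b) (h : 0 ≤ orient a b c) :
    ∀ p ∈ interior (convexHull ℝ ({a,b,c} : Set Pt)), 0 < orient a b p := by
  intro p hp
  have hsub := convexHull_orient_nonneg h
  have h0 : 0 ≤ orient a b p := hsub (interior_subset hp)
  rcases lt_or_eq_of_le h0 with h1 | h1
  · exact h1
  · exfalso
    obtain ⟨ε, hε, hball⟩ := Metric.isOpen_iff.mp isOpen_interior p hp
    set v : Pt := (b.2 - a.2, a.1 - b.1) with hv
    have hD : 0 < (b.1 - a.1)^2 + (b.2 - a.2)^2 := by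
      rcases Prod.mk.injEq a.1 a.2 b.1 b.2 ▸ (fun hh => hne hh) with _
      by_contra hD
      push_neg at hD
      have h1 : (b.1 - a.1)^2 ≤ 0 := by nlinarith [sq_nonneg (b.2 - a.2)]
      have h2 : (b.2 - a.2)^2 ≤ 0 := by nlinarith [sq_nonneg (b.1 - a.1)]
      apply hne
      have e1 : a.1 = b.1 := by nlinarith [sq_nonneg (b.1 - a.1)]
      have e2 : a.2 = b.2 := by nlinarith [sq_nonneg (b.2 - a.2)]
      exact Prod.ext e1 e2
    set t : ℝ := ε / (2 * (‖v‖ + 1)) with ht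
    have hnv : (0:ℝ) ≤ ‖v‖ := norm_nonneg v
    have htpos : 0 < t := by positivity
    have hq : p + t • v ∈ Metric.ball p ε := by
      simp only [Metric.mem_ball, dist_eq_norm, add_sub_cancel_left, norm_smul,
        Real.norm_eq_abs, abs_of_pos htpos]
      calc t * ‖v‖ < t * (‖v‖ + 1) := by nlinarith
        _ = ε / 2 := by rw [ht, div_mul_eq_mul_div, div_eq_div_iff (by positivity) (by positivity)]; ring
        _ < ε := by linarith
    have hmem := hsub (interior_subset (hball hq))
    simp only [Set.mem_setOf_eq] at hmem
    have heq : orient a b (p + t • v) = orient a b p - t * ((b.1 - a.1)^2 + (b.2 - a.2)^2) := by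
      simp only [orient, hv, Prod.fst_add, Prod.snd_add, Prod.smul_fst, Prod.smul_snd,
        smul_eq_mul]
      ring
    rw [heq, ← h1] at hmem
    nlinarith

lemma orient_sum (a b c p : Pt) :
    orient b c p + orient c a p + orient a b p = orient a b c := by
  simp only [orient]; ring

lemma mem_convexHull_of_orient {a b c p : Pt} (h1 : 0 < orient a b p)
    (h2 : 0 < orient b c p) (h3 : 0 < orient c a p) :
    p ∈ convexHull ℝ ({a,b,c} : Set Pt) := by
  have hO : 0 < orient a b c := by rw [← orient_sum a b c p]; positivity
  have key : Finset.univ.centerMass ![orient b c p, orient c a p, orient a b p] ![a, b, c]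
      ∈ convexHull ℝ ({a,b,c} : Set Pt) := by
    apply Finset.centerMass_mem_convexHull
    · intro i _; fin_cases i <;> simp <;> positivity
    · simp only [Fin.sum_univ_three, Matrix.cons_val_zero, Matrix.cons_val_one, Matrix.head_cons,
        Matrix.cons_val_two, Matrix.tail_cons]
      rw [show orient b c p + orient c a p + orient a b p = orient a b c from orient_sum a b c p]
      exact hO
    · intro i _; fin_cases i <;> simp
  convert key using 1
  rw [Finset.centerMass]
  simp only [Fin.sum_univ_three, Matrix.cons_val_zero, Matrix.cons_val_one, Matrix.head_cons,
    Matrix.cons_val_two, Matrix.tail_cons]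
  rw [show orient b c p + orient c a p + orient a b p = orient a b c from orient_sum a b c p]
  have hOne : orient a b c ≠ 0 := ne_of_gt hO
  apply Prod.ext
  · simp only [Prod.smul_fst, Prod.fst_add, smul_eq_mul]
    field_simp
    simp only [orient]
    ring
  · simp only [Prod.smul_snd, Prod.snd_add, smul_eq_mul]
    field_simp
    simp only [orient]
    ring

lemma orient_degen₁ (a b : Pt) : orient a a b = 0 := by simp only [orient]; ring
lemma orient_degen₂ (a b : Pt) : orient a b b = 0 := by simp only [orient]; ring
lemma orient_degen₃ (a b : Pt) : orient a b a = 0 := by simp only [orient]; ring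

lemma triangle_rot (a b c : Pt) : ({a,b,c} : Set Pt) = {b,c,a} := by
  ext p; simp; tauto

lemma mem_interior_triangle {a b c p : Pt} (hO : 0 < orient a b c) :
    p ∈ interior (convexHull ℝ ({a,b,c} : Set Pt)) ↔
      0 < orient a b p ∧ 0 < orient b c p ∧ 0 < orient c a p := by
  constructor
  · intro hp
    have hab : a ≠ b := by rintro rfl; rw [orient_degen₁] at hO; exact lt_irrefl _ hO
    have hbc : b ≠ c := by rintro rfl; rw [orient_degen₂] at hO; exact lt_irrefl _ hO
    have hca : c ≠ a := by rintro rfl; rw [orient_degen₃] at hO; exact lt_irrefl _ hO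
    refine ⟨interior_orient_pos hab (le_of_lt hO) p hp, ?_, ?_⟩
    · have hrot : ({a,b,c} : Set Pt) = {b,c,a} := triangle_rot a b c
      rw [hrot] at hp
      exact interior_orient_pos hbc (le_of_lt ((orient_cycle a b c) ▸ hO)) p hp
    · have hrot : ({a,b,c} : Set Pt) = {c,a,b} := by rw [triangle_rot, triangle_rot]
      rw [hrot] at hp
      exact interior_orient_pos hca
        (le_of_lt ((orient_cycle b c a) ▸ (orient_cycle a b c) ▸ hO)) p hp
  · rintro ⟨h1, h2, h3⟩
    have hopen : IsOpen {q : Pt | 0 < orient a b q ∧ 0 < orient b c q ∧ 0 < orient c a q} := by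
      have c1 : Continuous fun q : Pt => orient a b q := by unfold orient; fun_prop
      have c2 : Continuous fun q : Pt => orient b c q := by unfold orient; fun_prop
      have c3 : Continuous fun q : Pt => orient c a q := by unfold orient; fun_prop
      exact IsOpen.inter (isOpen_lt continuous_const c1)
        (IsOpen.inter (isOpen_lt continuous_const c2) (isOpen_lt continuous_const c3))
    have hsub : {q : Pt | 0 < orient a b q ∧ 0 < orient b c q ∧ 0 < orient c a q} ⊆
        convexHull ℝ ({a,b,c} : Set Pt) := by
      rintro q ⟨hq1, hq2, hq3⟩
      exact mem_convexHull_of_orient hq1 hq2 hq3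
    exact interior_maximal hsub hopen ⟨h1, h2, h3⟩


lemma prefix_len_lt {α : Type*} {s t : List α} (h : s <+: t) (hne : s ≠ t) :
    s.length < t.length := by
  rcases lt_or_eq_of_le h.length_le with h' | h'
  · exact h'
  · exact absurd (List.IsPrefix.eq_of_length h h') hne

lemma bits_clash {s t : List Bool} {b : Bool} (h1 : s ++ [b] <+: t) (h2 : s ++ [!b] <+: t) :
    False := by
  have hle : (s ++ [b]).length ≤ (s ++ [!b]).length := by simp
  have := List.prefix_of_prefix_length_le h1 h2 hle
  have heq := List.IsPrefix.eq_of_length this (by simp)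
  have : b = !b := by
    have := List.append_cancel_left heq
    simpa using this
  simp at this

lemma lca_pair : ∀ (s t : List Bool), s.length = t.length → s ≠ t →
    ∃ d b, d ++ [b] <+: s ∧ d ++ [!b] <+: t := by
  intro s
  induction s with
  | nil => intro t hlen hne; exact absurd (List.eq_nil_of_length_eq_zero hlen.symm).symm hne
  | cons a s' ih =>
    intro t hlen hne
    cases t with
    | nil => simp at hlen
    | cons b t' =>
      by_cases hab : a = b
      · subst hab
        have hne' : s' ≠ t' := by rintro rfl; exact hne rfl
        obtain ⟨d, β, h1, h2⟩ := ih t' (by simpa using hlen) hne'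
        exact ⟨a :: d, β, by simpa [List.cons_prefix_cons] using h1,
          by simpa [List.cons_prefix_cons] using h2⟩
      · refine ⟨[], a, by simp [List.cons_prefix_cons], ?_⟩
        have : b = !a := by cases a <;> cases b <;> simp_all
        simp [this, List.cons_prefix_cons]

lemma prefix_trichotomy : ∀ (s t : List Bool), s <+: t ∨ t <+: s ∨
    ∃ d b, d ++ [b] <+: s ∧ d ++ [!b] <+: t := by
  intro s
  induction s with
  | nil => intro t; left; exact t.nil_prefix
  | cons a s' ih =>
    intro t
    cases t with
    | nil => right; left; exact (a :: s').nil_prefix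
    | cons b t' =>
      by_cases hab : a = b
      · subst hab
        rcases ih t' with h | h | ⟨d, β, h1, h2⟩
        · left; simpa [List.cons_prefix_cons] using h
        · right; left; simpa [List.cons_prefix_cons] using h
        · right; right
          exact ⟨a :: d, β, by simpa [List.cons_prefix_cons] using h1,
            by simpa [List.cons_prefix_cons] using h2⟩
      · right; right
        refine ⟨[], a, by simp [List.cons_prefix_cons], ?_⟩
        have : b = !a := by cases a <;> cases b <;> simp_all
        simp [this, List.cons_prefix_cons]

lemma diverge_above {base s t e : List Bool} {β : Bool} (hbs : base <+: s) (hes : e ++ [β] <+: s)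
    (het : e ++ [!β] <+: t) (hbt : base <+: t) : base <+: e := by
  by_cases hle : base.length ≤ e.length
  · have h1 : base <+: e ++ [β] :=
      List.prefix_of_prefix_length_le hbs hes (by simp; omega)
    exact List.prefix_of_prefix_length_le h1 (e.prefix_append [β]) hle
  · push_neg at hle
    exfalso
    have h1 : e ++ [β] <+: base :=
      List.prefix_of_prefix_length_le hes hbs (by simp; omega)
    exact bits_clash (h1.trans hbt) het

lemma head_prefix {a : Bool} {s t : List Bool} (h : t <+: a :: s) (hne : t ≠ []) :
    [a] <+: t := by
  cases t with
  | nil => exact absurd rfl hne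
  | cons x xs =>
    rw [List.cons_prefix_cons] at h
    simp [List.cons_prefix_cons, h.1]


lemma set3_12 {α : Type*} (x y z : α) : ({x, y, z} : Set α) = {y, x, z} :=
  Set.insert_comm x y {z}

lemma set3_23 {α : Type*} (x y z : α) : ({x, y, z} : Set α) = {x, z, y} := by
  rw [Set.pair_comm]

lemma lca3 : ∀ (J : ℕ) (t1 t2 t3 : List Bool), t1.length = J → t2.length = J → t3.length = J →
    t1 ≠ t2 → t1 ≠ t3 → t2 ≠ t3 →
    ∃ r1 r2 r3 z u γ, ({r1, r2, r3} : Set (List Bool)) = {t1, t2, t3} ∧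
      u ++ [false] <+: r1 ∧ u ++ [true] <+: r2 ∧ z ++ [γ] <+: u ∧ z ++ [!γ] <+: r3 ∧
      r1.length = J ∧ r2.length = J ∧ r3.length = J := by
  intro J
  induction J with
  | zero =>
    intro t1 t2 t3 h1 h2 h3 h12 _ _
    exact absurd ((List.eq_nil_of_length_eq_zero h1).trans
      (List.eq_nil_of_length_eq_zero h2).symm) h12
  | succ J ih =>
    intro t1 t2 t3 h1 h2 h3 h12 h13 h23
    obtain ⟨a, s1, rfl⟩ : ∃ a s, t1 = a :: s := by
      cases t1 with | nil => simp at h1 | cons a s => exact ⟨a, s, rfl⟩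
    obtain ⟨b, s2, rfl⟩ : ∃ a s, t2 = a :: s := by
      cases t2 with | nil => simp at h2 | cons a s => exact ⟨a, s, rfl⟩
    obtain ⟨c, s3, rfl⟩ : ∃ a s, t3 = a :: s := by
      cases t3 with | nil => simp at h3 | cons a s => exact ⟨a, s, rfl⟩
    simp only [List.length_cons, Nat.add_right_cancel_iff] at h1 h2 h3
    by_cases hall : a = b ∧ b = c
    · obtain ⟨rfl, rfl⟩ := hall
      obtain ⟨r1, r2, r3, z, u, γ, hset, hu1, hu2, hz1, hz2, hl1, hl2, hl3⟩ :=
        ih s1 s2 s3 h1 h2 h3 (by simpa using h12) (by simpa using h13) (by simpa using h23)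
      refine ⟨a :: r1, a :: r2, a :: r3, a :: z, a :: u, γ, ?_, ?_, ?_, ?_, ?_, ?_, ?_, ?_⟩
      · have : ({a :: r1, a :: r2, a :: r3} : Set (List Bool)) =
            (fun l => a :: l) '' {r1, r2, r3} := by
          simp [Set.image_insert_eq]
        rw [this, hset]
        simp [Set.image_insert_eq]
      · simpa [List.cons_prefix_cons] using hu1
      · simpa [List.cons_prefix_cons] using hu2
      · simpa [List.cons_prefix_cons] using hz1
      · simpa [List.cons_prefix_cons] using hz2
      · simpa using hl1
      · simpa using hl2
      · simpa using hl3
    · -- two heads equal, third differs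
      have hsplit : (a = b ∧ a ≠ c) ∨ (a = c ∧ a ≠ b) ∨ (b = c ∧ a ≠ b) := by
        clear ih; cases a <;> cases b <;> cases c <;> simp_all
      -- helper to build from a pair with equal heads
      rcases hsplit with ⟨hab, hac⟩ | ⟨hac, hab⟩ | ⟨hbc, hab⟩
      · -- pair (t1,t2), loner t3
        subst hab
        obtain ⟨d, β, hd1, hd2⟩ := lca_pair (a :: s1) (a :: s2) (by simp [h1, h2]) h12
        have hdne : d ≠ [] := by
          rintro rfl
          simp only [List.nil_append] at hd1 hd2
          rw [List.cons_prefix_cons] at hd1 hd2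
          have hfb : (!β) = β := hd2.1.trans hd1.1.symm
          simp at hfb
        have hda : [a] <+: d := head_prefix ((d.prefix_append [β]).trans hd1) hdne
        have hca : c = !a := by clear ih; cases a <;> cases c <;> simp_all
        cases β
        · refine ⟨a :: s1, a :: s2, c :: s3, [], d, a, rfl, hd1, by simpa using hd2,
            by simpa using hda, by simp [hca, List.cons_prefix_cons], by simp [h1], by simp [h2], by simp [h3]⟩
        · refine ⟨a :: s2, a :: s1, c :: s3, [], d, a, ?_, by simpa using hd2, hd1,
            by simpa using hda, by simp [hca, List.cons_prefix_cons], by simp [h2], by simp [h1], by simp [h3]⟩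
          exact set3_12 _ _ _
      · -- pair (t1,t3), loner t2
        subst hac
        obtain ⟨d, β, hd1, hd2⟩ := lca_pair (a :: s1) (a :: s3) (by simp [h1, h3]) h13
        have hdne : d ≠ [] := by
          rintro rfl
          simp only [List.nil_append] at hd1 hd2
          rw [List.cons_prefix_cons] at hd1 hd2
          have hfb : (!β) = β := hd2.1.trans hd1.1.symm
          simp at hfb
        have hda : [a] <+: d := head_prefix ((d.prefix_append [β]).trans hd1) hdne
        have hba : b = !a := by clear ih; cases a <;> cases b <;> simp_all
        cases β
        · refine ⟨a :: s1, a :: s3, b :: s2, [], d, a, ?_, hd1, by simpa using hd2,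
            by simpa using hda, by simp [hba, List.cons_prefix_cons], by simp [h1], by simp [h3], by simp [h2]⟩
          exact set3_23 _ _ _
        · refine ⟨a :: s3, a :: s1, b :: s2, [], d, a, ?_, by simpa using hd2, hd1,
            by simpa using hda, by simp [hba, List.cons_prefix_cons], by simp [h3], by simp [h1], by simp [h2]⟩
          exact (set3_12 _ _ _).trans (set3_23 _ _ _)
      · -- pair (t2,t3), loner t1
        subst hbc
        obtain ⟨d, β, hd1, hd2⟩ := lca_pair (b :: s2) (b :: s3) (by simp [h2, h3]) h23
        have hdne : d ≠ [] := by
          rintro rfl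
          simp only [List.nil_append] at hd1 hd2
          rw [List.cons_prefix_cons] at hd1 hd2
          have hfb : (!β) = β := hd2.1.trans hd1.1.symm
          simp at hfb
        have hda : [b] <+: d := head_prefix ((d.prefix_append [β]).trans hd1) hdne
        have hba : a = !b := by clear ih; cases a <;> cases b <;> simp_all
        cases β
        · refine ⟨b :: s2, b :: s3, a :: s1, [], d, b, ?_, hd1, by simpa using hd2,
            by simpa using hda, by simp [hba, List.cons_prefix_cons], by simp [h2], by simp [h3], by simp [h1]⟩
          exact (set3_23 _ _ _).trans (set3_12 _ _ _)
        · refine ⟨b :: s3, b :: s2, a :: s1, [], d, b, ?_, by simpa using hd2, hd1,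
            by simpa using hda, by simp [hba, List.cons_prefix_cons], by simp [h3], by simp [h2], by simp [h1]⟩
          exact ((set3_23 _ _ _).trans (set3_12 _ _ _)).trans (set3_23 _ _ _)


lemma orient_swap12 (p q r : Pt) : orient q p r = -orient p q r := by simp only [orient]; ring
lemma orient_swap23 (p q r : Pt) : orient p r q = -orient p q r := by simp only [orient]; ring
lemma orient_swap13 (p q r : Pt) : orient r q p = -orient p q r := by simp only [orient]; ring
lemma orient_cyc (p q r : Pt) : orient p q r = orient q r p := by simp only [orient]; ring

section core

def Dsc (M : ℕ) (x : List Bool → Pt) (s : List Bool) : Set Pt :=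
  x '' {t | t.length ≤ M ∧ s <+: t ∧ s ≠ t}

def Bar (M : ℕ) (x : List Bool → Pt) (s : List Bool) : Set Pt :=
  insert (x s) (Dsc M x s)

lemma next_bit {s t : List Bool} (h : s <+: t) (hlt : s.length < t.length) :
    ∃ δ, s ++ [δ] <+: t := by
  obtain ⟨r, rfl⟩ := h
  cases r with
  | nil => simp at hlt
  | cons δ r' => exact ⟨δ, ⟨r', by simp⟩⟩

variable {X : Set Pt} {x : List Bool → Pt} {lo M J : ℕ}

lemma mem_Bar_of_prefix {s t : List Bool} (hM : t.length ≤ M) (h : s <+: t) :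
    x t ∈ Bar M x s := by
  by_cases he : s = t
  · subst he; exact Set.mem_insert _ _
  · exact Set.mem_insert_of_mem _ ⟨t, ⟨hM, h, he⟩, rfl⟩

lemma Dsc_subset_Bar (s : List Bool) : Dsc M x s ⊆ Bar M x s := Set.subset_insert _ _

lemma not_mem_Dsc (hInj : Set.InjOn x {s : List Bool | lo ≤ s.length ∧ s.length ≤ M})
    (hlo : lo ≤ 1) {s t : List Bool} (ht1 : lo ≤ t.length) (ht2 : t.length ≤ M)
    (hns : ¬ (s <+: t ∧ s ≠ t)) : x t ∉ Dsc M x s := by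
  rintro ⟨t', ⟨ht'M, ht's, ht'ne⟩, heq⟩
  have ht'len : 1 ≤ t'.length := by
    have := prefix_len_lt ht's ht'ne; omega
  have : t' = t := hInj ⟨le_trans hlo ht'len, ht'M⟩ ⟨ht1, ht2⟩ heq
  subst this
  exact hns ⟨ht's, ht'ne⟩

lemma not_mem_Bar (hInj : Set.InjOn x {s : List Bool | lo ≤ s.length ∧ s.length ≤ M})
    (hlo : lo ≤ 1) {s t : List Bool} (hs1 : lo ≤ s.length) (hs2 : s.length ≤ M)
    (ht1 : lo ≤ t.length) (ht2 : t.length ≤ M) (hns : ¬ s <+: t) : x t ∉ Bar M x s := by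
  intro hmem
  rcases hmem with heq | hmem
  · have ht := hInj ⟨ht1, ht2⟩ ⟨hs1, hs2⟩ heq
    exact hns (by rw [ht])
  · exact not_mem_Dsc hInj hlo ht1 ht2 (fun hh => hns hh.1) hmem

/-- CORE existence. -/
lemma core_exists
    (hInj : Set.InjOn x {s : List Bool | lo ≤ s.length ∧ s.length ≤ M})
    (hlo : lo ≤ 1) (hJM : J ≤ M)
    (hsub : ∀ s : List Bool, lo ≤ s.length → s.length ≤ M → x s ∈ X)
    (hInt : ∀ e : List Bool, e.length < J → ∀ y ∈ X \ Dsc M x e,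
      ∀ p ∈ Bar M x (e ++ [false]), ∀ q ∈ Bar M x (e ++ [true]), 0 < orient p q y)
    (hExt : ∀ s : List Bool, lo ≤ s.length → s.length < J → ∀ y ∈ X \ Bar M x s,
      (∀ p ∈ Bar M x (s ++ [false]), 0 < orient p (x s) y) ∧
      (∀ q ∈ Bar M x (s ++ [true]), 0 < orient (x s) q y))
    {t1 t2 u base : List Bool} {c : Pt}
    (ht1 : t1.length = J) (ht2 : t2.length = J)
    (hu0 : u ++ [false] <+: t1) (hu1 : u ++ [true] <+: t2)
    (hbase : base <+: u) (hulo : lo ≤ u.length)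
    (hcX : c ∈ X) (hcBar : ∀ v : List Bool, base <+: v → v.length ≤ M → c ∉ Bar M x v) :
    0 < orient (x t1) (x t2) (x u) ∧ 0 < orient (x t2) c (x u) ∧ 0 < orient c (x t1) (x u) := by
  have huJ : u.length < J := by
    have := hu0.length_le; simp at this; omega
  have huM : u.length ≤ M := le_trans (le_of_lt huJ) hJM
  have ht1M : t1.length ≤ M := by omega
  have ht2M : t2.length ≤ M := by omega
  have ha : x t1 ∈ Bar M x (u ++ [false]) := mem_Bar_of_prefix ht1M hu0
  have hb : x t2 ∈ Bar M x (u ++ [true]) := mem_Bar_of_prefix ht2M hu1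
  have hxuX : x u ∈ X := hsub u hulo huM
  have hxuD : x u ∉ Dsc M x u := not_mem_Dsc hInj hlo hulo huM (by simp)
  have h1 : 0 < orient (x t1) (x t2) (x u) := hInt u huJ (x u) ⟨hxuX, hxuD⟩ _ ha _ hb
  have hcB : c ∉ Bar M x u := hcBar u hbase huM
  have hext := hExt u hulo huJ c ⟨hcX, hcB⟩
  have h3' := hext.1 (x t1) ha
  have h2' := hext.2 (x t2) hb
  refine ⟨h1, ?_, ?_⟩
  · have : orient (x u) (x t2) c = orient (x t2) c (x u) := by simp only [orient]; ring
    linarith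
  · have : orient (x t1) (x u) c = orient c (x t1) (x u) := by simp only [orient]; ring
    linarith

/-- CORE uniqueness. -/
lemma core_unique
    (hInj : Set.InjOn x {s : List Bool | lo ≤ s.length ∧ s.length ≤ M})
    (hlo : lo ≤ 1) (hJM : J ≤ M)
    (hsub : ∀ s : List Bool, lo ≤ s.length → s.length ≤ M → x s ∈ X)
    (hInt : ∀ e : List Bool, e.length < J → ∀ y ∈ X \ Dsc M x e,
      ∀ p ∈ Bar M x (e ++ [false]), ∀ q ∈ Bar M x (e ++ [true]), 0 < orient p q y)
    (hExt : ∀ s : List Bool, lo ≤ s.length → s.length < J → ∀ y ∈ X \ Bar M x s,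
      (∀ p ∈ Bar M x (s ++ [false]), 0 < orient p (x s) y) ∧
      (∀ q ∈ Bar M x (s ++ [true]), 0 < orient (x s) q y))
    {t1 t2 u base w : List Bool} {c : Pt}
    (ht1 : t1.length = J) (ht2 : t2.length = J)
    (hu0 : u ++ [false] <+: t1) (hu1 : u ++ [true] <+: t2)
    (hbase : base <+: u)
    (hcX : c ∈ X) (hcBar : ∀ v : List Bool, base <+: v → v.length ≤ M → c ∉ Bar M x v)
    (hwb : base <+: w) (hwlo : lo ≤ w.length) (hwJ : w.length < J)
    (h1 : 0 < orient (x t1) (x t2) (x w))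
    (h2 : 0 < orient (x t2) c (x w))
    (h3 : 0 < orient c (x t1) (x w)) : w = u := by
  have huJ : u.length < J := by have := hu0.length_le; simp at this; omega
  have huM : u.length ≤ M := le_trans (le_of_lt huJ) hJM
  have hwM : w.length ≤ M := le_trans (le_of_lt hwJ) hJM
  have ht1M : t1.length ≤ M := by omega
  have ht2M : t2.length ≤ M := by omega
  have hut1 : u <+: t1 := (u.prefix_append [false]).trans hu0
  have hut2 : u <+: t2 := (u.prefix_append [true]).trans hu1
  have haX : x t1 ∈ X := hsub t1 (by omega) ht1M
  have hbX : x t2 ∈ X := hsub t2 (by omega) ht2M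
  have hcw : c ∉ Bar M x w := hcBar w hwb hwM
  rcases prefix_trichotomy w u with hwu | huw | ⟨e, β, he1, he2⟩
  · -- w ⊑ u
    by_cases heq : w = u
    · exact heq
    exfalso
    obtain ⟨δ, hδ⟩ := next_bit hwu (prefix_len_lt hwu heq)
    have hext := hExt w hwlo hwJ c ⟨hcX, hcw⟩
    cases δ
    · -- t2 ⊒ w ++ [false]
      have hbmem : x t2 ∈ Bar M x (w ++ [false]) :=
        mem_Bar_of_prefix ht2M (hδ.trans hut2)
      have hk := hext.1 (x t2) hbmem
      have : orient (x t2) (x w) c = -orient (x t2) c (x w) := orient_swap23 _ _ _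
      linarith
    · have hamem : x t1 ∈ Bar M x (w ++ [true]) :=
        mem_Bar_of_prefix ht1M (hδ.trans hut1)
      have hk := hext.2 (x t1) hamem
      have : orient (x w) (x t1) c = -orient c (x t1) (x w) := orient_swap13 _ _ _
      linarith
  · -- u ⊑ w
    by_cases heq : w = u
    · exact heq
    exfalso
    obtain ⟨δ, hδ⟩ := next_bit huw (prefix_len_lt huw (fun hh => heq hh.symm))
    cases δ
    · -- w ⊒ u ++ [false], same side as t1
      rcases prefix_trichotomy w t1 with hwt | htw | ⟨e, β, he1, he2⟩
      · have hwne : w ≠ t1 := by intro hh; rw [hh] at hwJ; omega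
        obtain ⟨δ'', hδ''⟩ := next_bit hwt (prefix_len_lt hwt hwne)
        cases δ''
        · have hbnB : x t2 ∉ Bar M x w :=
            not_mem_Bar hInj hlo hwlo hwM (by omega) ht2M
              (fun hh => bits_clash (b := false) (hδ.trans hh) hu1)
          have hext := hExt w hwlo hwJ (x t2) ⟨hbX, hbnB⟩
          have hk := hext.1 (x t1) (mem_Bar_of_prefix ht1M hδ'')
          have : orient (x t1) (x w) (x t2) = -orient (x t1) (x t2) (x w) :=
            orient_swap23 _ _ _
          linarith
        · have hext := hExt w hwlo hwJ c ⟨hcX, hcw⟩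
          have hk := hext.2 (x t1) (mem_Bar_of_prefix ht1M hδ'')
          have : orient (x w) (x t1) c = -orient c (x t1) (x w) := orient_swap13 _ _ _
          linarith
      · exfalso
        have := htw.length_le; omega
      · have hue : u ++ [false] <+: e := diverge_above hδ he1 he2 hu0
        have heJ : e.length < J := by
          have h1l := he1.length_le; simp at h1l; omega
        cases β
        · -- w left, t1 right
          have hcD : c ∉ Dsc M x e :=
            fun hh => hcBar e (hbase.trans ((u.prefix_append [false]).trans hue))
              (le_trans (le_of_lt heJ) hJM) (Dsc_subset_Bar e hh)
          have hk := hInt e heJ c ⟨hcX, hcD⟩ (x w) (mem_Bar_of_prefix hwM he1)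
            (x t1) (mem_Bar_of_prefix ht1M (by simpa using he2))
          have : orient (x w) (x t1) c = -orient c (x t1) (x w) := orient_swap13 _ _ _
          linarith
        · -- t1 left, w right
          have hbD : x t2 ∉ Dsc M x e := by
            apply not_mem_Dsc hInj hlo (by omega) ht2M
            rintro ⟨hh, -⟩
            exact bits_clash (b := false) (hue.trans hh) hu1
          have hk := hInt e heJ (x t2) ⟨hbX, hbD⟩
            (x t1) (mem_Bar_of_prefix ht1M (by simpa using he2))
            (x w) (mem_Bar_of_prefix hwM he1)
          have : orient (x t1) (x w) (x t2) = -orient (x t1) (x t2) (x w) :=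
            orient_swap23 _ _ _
          linarith
    · -- w ⊒ u ++ [true], same side as t2
      rcases prefix_trichotomy w t2 with hwt | htw | ⟨e, β, he1, he2⟩
      · have hwne : w ≠ t2 := by intro hh; rw [hh] at hwJ; omega
        obtain ⟨δ'', hδ''⟩ := next_bit hwt (prefix_len_lt hwt hwne)
        cases δ''
        · have hext := hExt w hwlo hwJ c ⟨hcX, hcw⟩
          have hk := hext.1 (x t2) (mem_Bar_of_prefix ht2M hδ'')
          have : orient (x t2) (x w) c = -orient (x t2) c (x w) := orient_swap23 _ _ _
          linarith
        · have hanB : x t1 ∉ Bar M x w :=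
            not_mem_Bar hInj hlo hwlo hwM (by omega) ht1M
              (fun hh => bits_clash (b := false) hu0 (by simpa using hδ.trans hh))
          have hext := hExt w hwlo hwJ (x t1) ⟨haX, hanB⟩
          have hk := hext.2 (x t2) (mem_Bar_of_prefix ht2M hδ'')
          have : orient (x w) (x t2) (x t1) = -orient (x t1) (x t2) (x w) :=
            orient_swap13 _ _ _
          linarith
      · exfalso
        have := htw.length_le; omega
      · have hue : u ++ [true] <+: e := diverge_above hδ he1 he2 hu1
        have heJ : e.length < J := by
          have h1l := he1.length_le; simp at h1l; omega
        cases β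
        · -- w left, t2 right
          have haD : x t1 ∉ Dsc M x e := by
            apply not_mem_Dsc hInj hlo (by omega) ht1M
            rintro ⟨hh, -⟩
            exact bits_clash (b := false) hu0 (by simpa using hue.trans hh)
          have hk := hInt e heJ (x t1) ⟨haX, haD⟩ (x w) (mem_Bar_of_prefix hwM he1)
            (x t2) (mem_Bar_of_prefix ht2M (by simpa using he2))
          have : orient (x w) (x t2) (x t1) = -orient (x t1) (x t2) (x w) :=
            orient_swap13 _ _ _
          linarith
        · -- t2 left, w right
          have hcD : c ∉ Dsc M x e :=
            fun hh => hcBar e (hbase.trans ((u.prefix_append [true]).trans hue))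
              (le_trans (le_of_lt heJ) hJM) (Dsc_subset_Bar e hh)
          have hk := hInt e heJ c ⟨hcX, hcD⟩
            (x t2) (mem_Bar_of_prefix ht2M (by simpa using he2))
            (x w) (mem_Bar_of_prefix hwM he1)
          have : orient (x t2) (x w) c = -orient (x t2) c (x w) := orient_swap23 _ _ _
          linarith
  · -- w and u diverge at e
    exfalso
    have hbe : base <+: e := diverge_above hwb he1 he2 hbase
    have heJ : e.length < J := by
      have h1l := he1.length_le; simp at h1l; omega
    have hcD : c ∉ Dsc M x e := fun hh => hcBar e hbe (le_trans (le_of_lt heJ) hJM)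
      (Dsc_subset_Bar e hh)
    cases β
    · -- w left, u right: t1 ⊒ e ++ [true]
      have hk := hInt e heJ c ⟨hcX, hcD⟩ (x w) (mem_Bar_of_prefix hwM he1)
        (x t1) (mem_Bar_of_prefix ht1M ((by simpa using he2 : e ++ [true] <+: u).trans hut1))
      have : orient (x w) (x t1) c = -orient c (x t1) (x w) := orient_swap13 _ _ _
      linarith
    · -- u left, w right: t2 ⊒ e ++ [false]
      have hk := hInt e heJ c ⟨hcX, hcD⟩
        (x t2) (mem_Bar_of_prefix ht2M ((by simpa using he2 : e ++ [false] <+: u).trans hut2))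
        (x w) (mem_Bar_of_prefix hwM he1)
      have : orient (x t2) (x w) c = -orient (x t2) c (x w) := orient_swap23 _ _ _
      linarith

/-- GAMMA: a candidate in a subtree entangled only with `t1` cannot be inside. -/
lemma gamma_kill
    (hInj : Set.InjOn x {s : List Bool | lo ≤ s.length ∧ s.length ≤ M})
    (hlo : lo ≤ 1) (hJM : J ≤ M)
    (hsub : ∀ s : List Bool, lo ≤ s.length → s.length ≤ M → x s ∈ X)
    (hInt : ∀ e : List Bool, e.length < J → ∀ y ∈ X \ Dsc M x e,
      ∀ p ∈ Bar M x (e ++ [false]), ∀ q ∈ Bar M x (e ++ [true]), 0 < orient p q y)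
    (hExt : ∀ s : List Bool, lo ≤ s.length → s.length < J → ∀ y ∈ X \ Bar M x s,
      (∀ p ∈ Bar M x (s ++ [false]), 0 < orient p (x s) y) ∧
      (∀ q ∈ Bar M x (s ++ [true]), 0 < orient (x s) q y))
    {t1 base w : List Bool} {q r : Pt}
    (ht1 : t1.length = J) (hbt : base <+: t1)
    (hqX : q ∈ X) (hrX : r ∈ X)
    (hqBar : ∀ v : List Bool, base <+: v → v.length ≤ M → q ∉ Bar M x v)
    (hrBar : ∀ v : List Bool, base <+: v → v.length ≤ M → r ∉ Bar M x v)
    (hwb : base <+: w) (hwlo : lo ≤ w.length) (hwJ : w.length < J)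
    (h1 : 0 < orient (x t1) q (x w))
    (h2 : 0 < orient q r (x w))
    (h3 : 0 < orient r (x t1) (x w)) : False := by
  have hwM : w.length ≤ M := le_trans (le_of_lt hwJ) hJM
  have ht1M : t1.length ≤ M := by omega
  rcases prefix_trichotomy w t1 with hwt | htw | ⟨e, β, he1, he2⟩
  · have hwne : w ≠ t1 := by intro hh; rw [hh] at hwJ; omega
    obtain ⟨δ, hδ⟩ := next_bit hwt (prefix_len_lt hwt hwne)
    cases δ
    · have hext := hExt w hwlo hwJ q ⟨hqX, hqBar w hwb hwM⟩
      have hk := hext.1 (x t1) (mem_Bar_of_prefix ht1M hδ)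
      have : orient (x t1) (x w) q = -orient (x t1) q (x w) := orient_swap23 _ _ _
      linarith
    · have hext := hExt w hwlo hwJ r ⟨hrX, hrBar w hwb hwM⟩
      have hk := hext.2 (x t1) (mem_Bar_of_prefix ht1M hδ)
      have : orient (x w) (x t1) r = -orient r (x t1) (x w) := orient_swap13 _ _ _
      linarith
  · have := htw.length_le; omega
  · have hbe : base <+: e := diverge_above hwb he1 he2 hbt
    have heJ : e.length < J := by
      have h1l := he1.length_le; simp at h1l; omega
    have heM : e.length ≤ M := le_trans (le_of_lt heJ) hJM
    cases β
    · -- w left, t1 right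
      have hk := hInt e heJ r ⟨hrX, fun hh => hrBar e hbe heM (Dsc_subset_Bar e hh)⟩
        (x w) (mem_Bar_of_prefix hwM he1)
        (x t1) (mem_Bar_of_prefix ht1M (by simpa using he2))
      have : orient (x w) (x t1) r = -orient r (x t1) (x w) := orient_swap13 _ _ _
      linarith
    · -- t1 left, w right
      have hk := hInt e heJ q ⟨hqX, fun hh => hqBar e hbe heM (Dsc_subset_Bar e hh)⟩
        (x t1) (mem_Bar_of_prefix ht1M (by simpa using he2))
        (x w) (mem_Bar_of_prefix hwM he1)
      have : orient (x t1) (x w) q = -orient (x t1) q (x w) := orient_swap23 _ _ _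
      linarith

/-- Step 1 for ALPHA: inside points must lie in the subtree below `z`. -/
lemma alpha_step1
    (hJM : J ≤ M)
    (hInt : ∀ e : List Bool, e.length < J → ∀ y ∈ X \ Dsc M x e,
      ∀ p ∈ Bar M x (e ++ [false]), ∀ q ∈ Bar M x (e ++ [true]), 0 < orient p q y)
    {t1 t2 t3 u z : List Bool} {γ : Bool}
    (ht1 : t1.length = J) (ht2 : t2.length = J) (ht3 : t3.length = J)
    (hu0 : u ++ [false] <+: t1) (hu1 : u ++ [true] <+: t2)
    (hz : z ++ [γ] <+: u) (hz3 : z ++ [!γ] <+: t3)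
    {y : Pt} (hyX : y ∈ X) (hyD : y ∉ Dsc M x z)
    (h2 : 0 < orient (x t2) (x t3) y) (h3 : 0 < orient (x t3) (x t1) y) : False := by
  have hut1 : u <+: t1 := (u.prefix_append [false]).trans hu0
  have hut2 : u <+: t2 := (u.prefix_append [true]).trans hu1
  have huJ : u.length < J := by have := hu0.length_le; simp at this; omega
  have hzJ : z.length < J := by have := hz.length_le; simp at this; omega
  have ht1M : t1.length ≤ M := by omega
  have ht2M : t2.length ≤ M := by omega
  have ht3M : t3.length ≤ M := by omega
  cases γ
  · have hk := hInt z hzJ y ⟨hyX, hyD⟩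
      (x t1) (mem_Bar_of_prefix ht1M (hz.trans hut1))
      (x t3) (mem_Bar_of_prefix ht3M (by simpa using hz3))
    have : orient (x t1) (x t3) y = -orient (x t3) (x t1) y := orient_swap12 _ _ _
    linarith
  · have hk := hInt z hzJ y ⟨hyX, hyD⟩
      (x t3) (mem_Bar_of_prefix ht3M (by simpa using hz3))
      (x t2) (mem_Bar_of_prefix ht2M (hz.trans hut2))
    have : orient (x t3) (x t2) y = -orient (x t2) (x t3) y := orient_swap12 _ _ _
    linarith

/-- ALPHA: three nodes in the tree. -/
lemma alpha_main
    (hInj : Set.InjOn x {s : List Bool | lo ≤ s.length ∧ s.length ≤ M})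
    (hlo : lo ≤ 1) (hJM : J ≤ M)
    (hsub : ∀ s : List Bool, lo ≤ s.length → s.length ≤ M → x s ∈ X)
    (hInt : ∀ e : List Bool, e.length < J → ∀ y ∈ X \ Dsc M x e,
      ∀ p ∈ Bar M x (e ++ [false]), ∀ q ∈ Bar M x (e ++ [true]), 0 < orient p q y)
    (hExt : ∀ s : List Bool, lo ≤ s.length → s.length < J → ∀ y ∈ X \ Bar M x s,
      (∀ p ∈ Bar M x (s ++ [false]), 0 < orient p (x s) y) ∧
      (∀ q ∈ Bar M x (s ++ [true]), 0 < orient (x s) q y))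
    {t1 t2 t3 u z : List Bool} {γ : Bool}
    (ht1 : t1.length = J) (ht2 : t2.length = J) (ht3 : t3.length = J)
    (hu0 : u ++ [false] <+: t1) (hu1 : u ++ [true] <+: t2)
    (hz : z ++ [γ] <+: u) (hz3 : z ++ [!γ] <+: t3) :
    x u ∈ interior (convexHull ℝ ({x t1, x t2, x t3} : Set Pt)) ∧
    (∀ w : List Bool, lo ≤ w.length → w.length < J →
      x w ∈ interior (convexHull ℝ ({x t1, x t2, x t3} : Set Pt)) → w = u) ∧
    (∀ y ∈ X, y ∈ interior (convexHull ℝ ({x t1, x t2, x t3} : Set Pt)) → y ∈ Dsc M x z) := by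
  have hut1 : u <+: t1 := (u.prefix_append [false]).trans hu0
  have hut2 : u <+: t2 := (u.prefix_append [true]).trans hu1
  have huJ : u.length < J := by have := hu0.length_le; simp at this; omega
  have huM : u.length ≤ M := le_trans (le_of_lt huJ) hJM
  have hulo : lo ≤ u.length := by
    have := hz.length_le; simp at this; omega
  have ht1M : t1.length ≤ M := by omega
  have ht2M : t2.length ≤ M := by omega
  have ht3M : t3.length ≤ M := by omega
  have ht3lo : lo ≤ t3.length := by omega
  have ht3X : x t3 ∈ X := hsub t3 ht3lo ht3M
  have hzu : z <+: u := (z.prefix_append [γ]).trans hz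
  -- x t3 is outside every bar on the u side
  have hcBar : ∀ v : List Bool, z ++ [γ] <+: v → v.length ≤ M → x t3 ∉ Bar M x v := by
    intro v hv hvM
    apply not_mem_Bar hInj hlo (by have := hv.length_le; simp at this; omega) hvM ht3lo ht3M
    intro hvt
    exact bits_clash (hv.trans hvt) hz3
  -- orientation of the triangle
  have ht3nD : x t3 ∉ Dsc M x u := by
    apply not_mem_Dsc hInj hlo ht3lo ht3M
    rintro ⟨hh, -⟩
    exact bits_clash (hz.trans hh) hz3
  have hO : 0 < orient (x t1) (x t2) (x t3) :=
    hInt u huJ (x t3) ⟨ht3X, ht3nD⟩ (x t1) (mem_Bar_of_prefix ht1M hu0)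
      (x t2) (mem_Bar_of_prefix ht2M hu1)
  obtain ⟨o1, o2, o3⟩ := core_exists hInj hlo hJM hsub hInt hExt ht1 ht2 hu0 hu1 hz
    hulo ht3X hcBar
  refine ⟨(mem_interior_triangle hO).mpr ⟨o1, o2, o3⟩, ?_, ?_⟩
  · intro w hwlo hwJ hwin
    obtain ⟨h1, h2, h3⟩ := (mem_interior_triangle hO).mp hwin
    have hwM : w.length ≤ M := le_trans (le_of_lt hwJ) hJM
    by_cases hzw : z <+: w ∧ z ≠ w
    · obtain ⟨δ, hδ⟩ := next_bit hzw.1 (prefix_len_lt hzw.1 hzw.2)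
      by_cases hδγ : δ = γ
      · subst hδγ
        exact core_unique hInj hlo hJM hsub hInt hExt ht1 ht2 hu0 hu1 hz ht3X hcBar
          hδ hwlo hwJ h1 h2 h3
      · exfalso
        have hδγ' : δ = !γ := by cases δ <;> cases γ <;> simp_all
        subst hδγ'
        refine gamma_kill hInj hlo hJM hsub hInt hExt ht3 hz3 (hsub t1 (by omega) ht1M)
          (hsub t2 (by omega) ht2M) ?_ ?_ hδ hwlo hwJ h3 h1 h2
        · intro v hv hvM
          apply not_mem_Bar hInj hlo (by have := hv.length_le; simp at this; omega) hvM
            (by omega) ht1M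
          intro hvt
          exact bits_clash (hv.trans hvt) (by simpa using hz.trans hut1)
        · intro v hv hvM
          apply not_mem_Bar hInj hlo (by have := hv.length_le; simp at this; omega) hvM
            (by omega) ht2M
          intro hvt
          exact bits_clash (hv.trans hvt) (by simpa using hz.trans hut2)
    · exfalso
      have hwD : x w ∉ Dsc M x z := not_mem_Dsc hInj hlo hwlo hwM hzw
      exact alpha_step1 hJM hInt ht1 ht2 ht3 hu0 hu1 hz hz3 (hsub w hwlo hwM) hwD h2 h3
  · intro y hyX hyin
    obtain ⟨h1, h2, h3⟩ := (mem_interior_triangle hO).mp hyin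
    by_contra hyD
    exact alpha_step1 hJM hInt ht1 ht2 ht3 hu0 hu1 hz hz3 hyX hyD h2 h3

/-- BETA: two nodes in the tree and an external point. -/
lemma beta_main
    (hInj : Set.InjOn x {s : List Bool | lo ≤ s.length ∧ s.length ≤ M})
    (hlo : lo ≤ 1) (hJM : J ≤ M)
    (hsub : ∀ s : List Bool, lo ≤ s.length → s.length ≤ M → x s ∈ X)
    (hInt : ∀ e : List Bool, e.length < J → ∀ y ∈ X \ Dsc M x e,
      ∀ p ∈ Bar M x (e ++ [false]), ∀ q ∈ Bar M x (e ++ [true]), 0 < orient p q y)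
    (hExt : ∀ s : List Bool, lo ≤ s.length → s.length < J → ∀ y ∈ X \ Bar M x s,
      (∀ p ∈ Bar M x (s ++ [false]), 0 < orient p (x s) y) ∧
      (∀ q ∈ Bar M x (s ++ [true]), 0 < orient (x s) q y))
    {t1 t2 u : List Bool} {c : Pt}
    (ht1 : t1.length = J) (ht2 : t2.length = J)
    (hu0 : u ++ [false] <+: t1) (hu1 : u ++ [true] <+: t2)
    (hulo : lo ≤ u.length)
    (hcX : c ∈ X) (hcBar : ∀ v : List Bool, v.length ≤ M → c ∉ Bar M x v) :
    0 < orient (x t1) (x t2) c ∧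
    x u ∈ interior (convexHull ℝ ({x t1, x t2, c} : Set Pt)) ∧
    (∀ w : List Bool, lo ≤ w.length → w.length < J →
      x w ∈ interior (convexHull ℝ ({x t1, x t2, c} : Set Pt)) → w = u) := by
  have huJ : u.length < J := by have := hu0.length_le; simp at this; omega
  have huM : u.length ≤ M := le_trans (le_of_lt huJ) hJM
  have ht1M : t1.length ≤ M := by omega
  have ht2M : t2.length ≤ M := by omega
  have hcBar' : ∀ v : List Bool, ([] : List Bool) <+: v → v.length ≤ M → c ∉ Bar M x v :=
    fun v _ hvM => hcBar v hvM
  have hcD : c ∉ Dsc M x u := fun hh => hcBar u huM (Dsc_subset_Bar u hh)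
  have hO : 0 < orient (x t1) (x t2) c :=
    hInt u huJ c ⟨hcX, hcD⟩ (x t1) (mem_Bar_of_prefix ht1M hu0)
      (x t2) (mem_Bar_of_prefix ht2M hu1)
  obtain ⟨o1, o2, o3⟩ := core_exists hInj hlo hJM hsub hInt hExt ht1 ht2 hu0 hu1
    u.nil_prefix hulo hcX hcBar'
  refine ⟨hO, (mem_interior_triangle hO).mpr ⟨o1, o2, o3⟩, ?_⟩
  intro w hwlo hwJ hwin
  obtain ⟨h1, h2, h3⟩ := (mem_interior_triangle hO).mp hwin
  exact core_unique hInj hlo hJM hsub hInt hExt ht1 ht2 hu0 hu1 u.nil_prefix hcX hcBar'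
    w.nil_prefix hwlo hwJ h1 h2 h3

end core


@[simp] lemma strOfNat_length (j i : ℕ) : (strOfNat j i).length = j := by
  simp [strOfNat]

lemma natOfStr_append (s : List Bool) (b : Bool) :
    natOfStr (s ++ [b]) = 2 * natOfStr s + b.toNat := by
  simp [natOfStr, List.foldl_append]

lemma natOfStr_lt (s : List Bool) : natOfStr s < 2 ^ s.length := by
  induction s using List.reverseRecOn with
  | nil => simp [natOfStr]
  | append_singleton s b ih =>
    rw [natOfStr_append]
    simp only [List.length_append, List.length_singleton]
    have : b.toNat ≤ 1 := Bool.toNat_le b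
    rw [pow_succ]
    omega

lemma strOfNat_succ (j i : ℕ) :
    strOfNat (j + 1) i = strOfNat j (i / 2) ++ [i.testBit 0] := by
  unfold strOfNat
  rw [List.range_succ, List.map_append]
  congr 1
  · apply List.map_congr_left
    intro t ht
    simp only [List.mem_range] at ht
    have h : j + 1 - 1 - t = (j - 1 - t) + 1 := by omega
    rw [h, Nat.testBit_succ]
  · simp

lemma strOfNat_natOfStr (s : List Bool) : strOfNat s.length (natOfStr s) = s := by
  induction s using List.reverseRecOn with
  | nil => simp [strOfNat]
  | append_singleton s b ih =>
    rw [natOfStr_append]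
    simp only [List.length_append, List.length_singleton]
    rw [strOfNat_succ]
    have h2 : (2 * natOfStr s + b.toNat) / 2 = natOfStr s := by
      have : b.toNat ≤ 1 := Bool.toNat_le b
      omega
    have h3 : (2 * natOfStr s + b.toNat).testBit 0 = b := by
      rw [Nat.testBit_zero]
      cases b <;> simp <;> omega
    rw [h2, h3, ih]

lemma range_strOfNat {α : Type*} (xn : List Bool → α) (j : ℕ) :
    Set.range (fun i : Fin (2 ^ j) => xn (strOfNat j i.val)) = xn '' {s | s.length = j} := by
  ext p
  constructor
  · rintro ⟨i, rfl⟩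
    exact ⟨strOfNat j i.val, by simp, rfl⟩
  · rintro ⟨s, hs, rfl⟩
    simp only [Set.mem_setOf_eq] at hs
    refine ⟨⟨natOfStr s, by rw [← hs]; exact natOfStr_lt s⟩, ?_⟩
    simp only
    rw [← hs, strOfNat_natOfStr]


end AUX

section WRAP

lemma hasLayers_unique {X : Set Pt} {k k' : ℕ} (h : HasLayers X k) (h' : HasLayers X k') :
    k = k' := by
  by_contra hne
  rcases Nat.lt_or_ge k k' with hlt | hge
  · exact h'.2 k hlt h.1
  · exact h.2 k' (by omega) h'.1

lemma descSet1_eq_Dsc (k : ℕ) (x : List Bool → Pt) (s : List Bool) :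
    descSet1 k x s = Dsc k x s := by
  unfold descSet1 Dsc
  have hss : {t : List Bool | ValidNode1 k t ∧ s <+: t ∧ s ≠ t} =
      {t : List Bool | t.length ≤ k ∧ s <+: t ∧ s ≠ t} := by
    ext t
    simp only [Set.mem_setOf_eq, ValidNode1]
    constructor
    · rintro ⟨⟨ha1, ha2⟩, ha3, ha4⟩; exact ⟨ha2, ha3, ha4⟩
    · rintro ⟨ha2, ha3, ha4⟩
      have := prefix_len_lt ha3 ha4
      exact ⟨⟨by omega, ha2⟩, ha3, ha4⟩
  rw [hss]

lemma barSet1_eq_Bar (k : ℕ) (x : List Bool → Pt) (s : List Bool) :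
    barSet1 k x s = Bar k x s := by
  unfold barSet1 Bar; rw [descSet1_eq_Dsc]

lemma layer1_eq {X : Set Pt} {k : ℕ} {x : List Bool → Pt} (hN : Nested1 k X x)
    {j : ℕ} (h1 : 1 ≤ j) (hj : j ≤ k) : layer X k j = x '' {s | s.length = j} := by
  have := (hN j h1 hj).2.1
  rw [← this, range_strOfNat]

lemma layerSub1_eq {X : Set Pt} {k : ℕ} {x : List Bool → Pt}
    (hL : IsLabeling1 k X x) (hN : Nested1 k X x) :
    ∀ d j, j + d = k → layerSub X k j = x '' {s | 1 ≤ s.length ∧ s.length ≤ j} := by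
  intro d
  induction d with
  | zero =>
    intro j hj
    have hjk : j = k := by omega
    subst hjk
    unfold layerSub
    rw [Nat.sub_self, Function.iterate_zero_apply, ← hL.2]
    have hvv : {s : List Bool | ValidNode1 j s} = {s : List Bool | 1 ≤ s.length ∧ s.length ≤ j} := by
      ext s; simp [ValidNode1]
    rw [hvv]
  | succ d ih =>
    intro j hj
    have hS := ih (j + 1) (by omega)
    have hstep : layerSub X k j = peel (layerSub X k (j + 1)) := by
      unfold layerSub
      have hh : k - j = (k - (j + 1)) + 1 := by omega
      rw [hh, Function.iterate_succ_apply']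
    rw [hstep]
    have hlayer : layer X k (j + 1) = x '' {s | s.length = j + 1} :=
      layer1_eq hN (by omega) (by omega)
    have hext : extremePts (layerSub X k (j + 1)) = layer X k (j + 1) := rfl
    unfold peel
    rw [hext, hS, hlayer]
    have hinj : Set.InjOn x {s : List Bool | 1 ≤ s.length ∧ s.length ≤ j + 1} := by
      apply hL.1.mono
      intro s hs
      simp only [Set.mem_setOf_eq] at hs ⊢
      exact ⟨hs.1, by omega⟩
    rw [← Set.InjOn.image_diff_subset hinj (by intro s hs; simp only [Set.mem_setOf_eq] at hs ⊢; omega)]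
    have hdd : {s : List Bool | 1 ≤ s.length ∧ s.length ≤ j + 1} \ {s | s.length = j + 1} =
        {s : List Bool | 1 ≤ s.length ∧ s.length ≤ j} := by
      ext s
      simp only [Set.mem_diff, Set.mem_setOf_eq]
      omega
    rw [hdd]

lemma three_distinct_len1 {t1 t2 t3 : List Bool} (h1 : t1.length = 1) (h2 : t2.length = 1)
    (h3 : t3.length = 1) (h12 : t1 ≠ t2) (h13 : t1 ≠ t3) (h23 : t2 ≠ t3) : False := by
  obtain ⟨b1, rfl⟩ : ∃ b, t1 = [b] := by
    cases t1 with | nil => simp at h1 | cons a s => cases s with | nil => exact ⟨a, rfl⟩ | cons c r => simp at h1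
  obtain ⟨b2, rfl⟩ : ∃ b, t2 = [b] := by
    cases t2 with | nil => simp at h2 | cons a s => cases s with | nil => exact ⟨a, rfl⟩ | cons c r => simp at h2
  obtain ⟨b3, rfl⟩ : ∃ b, t3 = [b] := by
    cases t3 with | nil => simp at h3 | cons a s => cases s with | nil => exact ⟨a, rfl⟩ | cons c r => simp at h3
  cases b1 <;> cases b2 <;> cases b3 <;> simp_all

lemma nacs1 {X : Set Pt} {k : ℕ} {x : List Bool → Pt}
    (hfin : X.Finite) (hne : X.Nonempty) (hgp : GenPos X) (hk : HasLayers X k)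
    (hL : IsLabeling1 k X x) (hN : Nested1 k X x)
    (hI : InternalSep1 k X x) (hE : ExternalSep1 k X x) : IsNACS X := by
  refine ⟨hfin, hne, hgp, ?_⟩
  intro k' hk'
  obtain rfl : k = k' := hasLayers_unique hk hk'
  intro j hj1 hjk a ha b hb c hc hab hac hbc
  have hlay := layer1_eq hN hj1 hjk
  rw [hlay] at ha hb hc
  obtain ⟨t1, ht1, rfl⟩ := ha
  obtain ⟨t2, ht2, rfl⟩ := hb
  obtain ⟨t3, ht3, rfl⟩ := hc
  simp only [Set.mem_setOf_eq] at ht1 ht2 ht3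
  have h12 : t1 ≠ t2 := fun h => hab (by rw [h])
  have h13 : t1 ≠ t3 := fun h => hac (by rw [h])
  have h23 : t2 ≠ t3 := fun h => hbc (by rw [h])
  have hj2 : 2 ≤ j := by
    by_contra hcon
    have hj1' : j = 1 := by omega
    subst hj1'
    exact three_distinct_len1 ht1 ht2 ht3 h12 h13 h23
  obtain ⟨r1, r2, r3, z, u, γ, hset, hu0, hu1, hz, hz3, hr1, hr2, hr3⟩ :=
    lca3 j t1 t2 t3 ht1 ht2 ht3 h12 h13 h23
  have hTset : ({x t1, x t2, x t3} : Set Pt) = {x r1, x r2, x r3} := by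
    have e1 : ({x t1, x t2, x t3} : Set Pt) = x '' {t1, t2, t3} := by
      simp [Set.image_insert_eq]
    have e2 : ({x r1, x r2, x r3} : Set Pt) = x '' {r1, r2, r3} := by
      simp [Set.image_insert_eq]
    rw [e1, e2, hset]
  rw [hTset]
  have hInj : Set.InjOn x {s : List Bool | 1 ≤ s.length ∧ s.length ≤ k} := hL.1
  have hsub : ∀ s : List Bool, 1 ≤ s.length → s.length ≤ k → x s ∈ X := by
    intro s hs1 hs2
    rw [← hL.2]
    exact ⟨s, ⟨hs1, hs2⟩, rfl⟩
  have hInt : ∀ e : List Bool, e.length < j → ∀ y ∈ X \ Dsc k x e,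
      ∀ p ∈ Bar k x (e ++ [false]), ∀ q ∈ Bar k x (e ++ [true]), 0 < orient p q y := by
    intro e he y hy p hp q hq
    rw [← descSet1_eq_Dsc] at hy
    exact hI e (by omega) y hy p (by rw [barSet1_eq_Bar]; exact hp)
      q (by rw [barSet1_eq_Bar]; exact hq)
  have hExt : ∀ s : List Bool, 1 ≤ s.length → s.length < j → ∀ y ∈ X \ Bar k x s,
      (∀ p ∈ Bar k x (s ++ [false]), 0 < orient p (x s) y) ∧
      (∀ q ∈ Bar k x (s ++ [true]), 0 < orient (x s) q y) := by
    intro s hs1 hs2 y hy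
    rw [← barSet1_eq_Bar] at hy
    have := hE s hs1 (by omega) y hy
    constructor
    · intro p hp; exact this.1 p (by rw [barSet1_eq_Bar]; exact hp)
    · intro q hq; exact this.2 q (by rw [barSet1_eq_Bar]; exact hq)
  obtain ⟨hin, huniq, -⟩ := alpha_main (lo := 1) hInj (le_refl 1) hjk hsub hInt hExt
    hr1 hr2 hr3 hu0 hu1 hz hz3
  have hulen : 1 ≤ u.length ∧ u.length ≤ j - 1 := by
    have l1 := hz.length_le
    have l2 := hu0.length_le
    simp only [List.length_append, List.length_singleton] at l1 l2
    omega
  have hSub : layerSub X k (j - 1) = x '' {s | 1 ≤ s.length ∧ s.length ≤ j - 1} :=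
    layerSub1_eq hL hN (k - (j - 1)) (j - 1) (by omega)
  refine ⟨x u, ⟨?_, hin⟩, ?_⟩
  · rw [hSub]
    exact ⟨u, ⟨hulen.1, hulen.2⟩, rfl⟩
  · rintro p ⟨hp1, hp2⟩
    rw [hSub] at hp1
    obtain ⟨w, ⟨hw1, hw2⟩, rfl⟩ := hp1
    rw [huniq w hw1 (by omega) hp2]

end WRAP


section WRAP2

/-- Level of a node of `T₂`. -/
def NdLvl : Node2 → ℕ := fun u => match u with
  | none => 1
  | some p => p.2.length + 2

@[simp] lemma NdLvl_none : NdLvl none = 1 := rfl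
@[simp] lemma NdLvl_some (c : Fin 3) (s : List Bool) : NdLvl (some (c, s)) = s.length + 2 := rfl

/-- The per-colour label function. -/
def xc (x : Node2 → Pt) (γ : Fin 3) : List Bool → Pt := fun s => x (some (γ, s))

lemma range_node2At {α : Type*} (xn : Node2 → α) (j : ℕ) :
    Set.range (fun i : Fin (3 * 2 ^ j) => xn (node2At j i.val)) =
      xn '' {u : Node2 | ∃ (cc : Fin 3) (s : List Bool), s.length = j ∧ u = some (cc, s)} := by
  ext p
  constructor
  · rintro ⟨i, rfl⟩
    exact ⟨node2At j i.val, ⟨_, _, by simp, rfl⟩, rfl⟩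
  · rintro ⟨u, ⟨cc, s, hlen, rfl⟩, rfl⟩
    have hn : natOfStr s < 2 ^ j := by rw [← hlen]; exact natOfStr_lt s
    have h2 : 0 < 2 ^ j := Nat.pow_pos (by omega)
    have hcc : cc.val < 3 := cc.isLt
    refine ⟨⟨2 ^ j * cc.val + natOfStr s, by nlinarith⟩, ?_⟩
    have hd : (2 ^ j * cc.val + natOfStr s) / 2 ^ j = cc.val := by
      rw [Nat.add_comm, Nat.add_mul_div_left _ _ h2, Nat.div_eq_of_lt hn, Nat.zero_add]
    have hm : (2 ^ j * cc.val + natOfStr s) % 2 ^ j = natOfStr s := by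
      rw [Nat.mul_add_mod, Nat.mod_eq_of_lt hn]
    have hstr : strOfNat j (natOfStr s) = s := by
      rw [← hlen]; exact strOfNat_natOfStr s
    refine congrArg xn (congrArg some (Prod.ext ?_ ?_))
    · apply Fin.ext
      show (2 ^ j * ↑cc + natOfStr s) / 2 ^ j % 3 = cc.val
      rw [hd]
      exact Nat.mod_eq_of_lt hcc
    · show strOfNat j ((2 ^ j * ↑cc + natOfStr s) % 2 ^ j) = s
      rw [hm]
      exact hstr

lemma layer2_1 {X : Set Pt} {k : ℕ} {x : Node2 → Pt} (hN : Nested2 k X x) :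
    layer X k 1 = {x none} := by
  have := hN.1.2.1
  rw [← this]
  ext p
  simp [Set.range]

lemma layer2_eq {X : Set Pt} {k : ℕ} {x : Node2 → Pt} (hN : Nested2 k X x)
    {j : ℕ} (hj2 : 2 ≤ j) (hjk : j ≤ k) :
    layer X k j = x '' {u : Node2 | ∃ (cc : Fin 3) (s : List Bool),
      s.length = j - 2 ∧ u = some (cc, s)} := by
  have := (hN.2 (j - 2) (by omega)).2.1
  rw [show j - 2 + 2 = j from by omega] at this
  rw [← this, range_node2At]

lemma layerSub2_eq {X : Set Pt} {k : ℕ} {x : Node2 → Pt}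
    (hL : IsLabeling2 k X x) (hN : Nested2 k X x) :
    ∀ d j, 1 ≤ j → j + d = k →
      layerSub X k j = x '' {u : Node2 | ValidNode2 k u ∧ NdLvl u ≤ j} := by
  intro d
  induction d with
  | zero =>
    intro j hj1 hj
    have hjk : j = k := by omega
    subst hjk
    unfold layerSub
    rw [Nat.sub_self, Function.iterate_zero_apply, ← hL.2]
    have hvv : {u : Node2 | ValidNode2 j u} = {u : Node2 | ValidNode2 j u ∧ NdLvl u ≤ j} := by
      ext u
      rcases u with _ | ⟨cc0, s0⟩
      · simp only [Set.mem_setOf_eq, NdLvl_none]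
        constructor
        · intro h; exact ⟨h, by omega⟩
        · intro h; exact h.1
      · simp only [Set.mem_setOf_eq, NdLvl_some]
        constructor
        · intro h; exact ⟨h, h⟩
        · intro h; exact h.1
    rw [hvv]
  | succ d ih =>
    intro j hj1 hj
    have hS := ih (j + 1) (by omega) (by omega)
    have hstep : layerSub X k j = peel (layerSub X k (j + 1)) := by
      unfold layerSub
      have hh : k - j = (k - (j + 1)) + 1 := by omega
      rw [hh, Function.iterate_succ_apply']
    rw [hstep]
    have hlayer : layer X k (j + 1) = x '' {u : Node2 | ∃ (cc : Fin 3) (s : List Bool),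
        s.length = (j + 1) - 2 ∧ u = some (cc, s)} :=
      layer2_eq hN (by omega) (by omega)
    have hext : extremePts (layerSub X k (j + 1)) = layer X k (j + 1) := rfl
    unfold peel
    rw [hext, hS, hlayer]
    have hinj : Set.InjOn x {u : Node2 | ValidNode2 k u ∧ NdLvl u ≤ j + 1} :=
      hL.1.mono (fun u hu => hu.1)
    rw [← Set.InjOn.image_diff_subset hinj ?hsub]
    case hsub =>
      rintro u ⟨cc, s, hlen, rfl⟩
      have : s.length + 2 ≤ k := by omega
      exact ⟨this, by simp; omega⟩
    have hdd : ({u : Node2 | ValidNode2 k u ∧ NdLvl u ≤ j + 1} \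
        {u : Node2 | ∃ (cc : Fin 3) (s : List Bool), s.length = (j + 1) - 2 ∧ u = some (cc, s)})
        = {u : Node2 | ValidNode2 k u ∧ NdLvl u ≤ j} := by
      ext u
      rcases u with _ | ⟨cc0, s0⟩
      · simp only [Set.mem_diff, Set.mem_setOf_eq, NdLvl_none]
        constructor
        · intro h; exact ⟨h.1.1, by omega⟩
        · intro h
          refine ⟨⟨h.1, by omega⟩, ?_⟩
          rintro ⟨cc, s, hlen, hcon⟩
          cases hcon
      · simp only [Set.mem_diff, Set.mem_setOf_eq, NdLvl_some]
        constructor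
        · rintro ⟨⟨hv, hl⟩, hsh⟩
          refine ⟨hv, ?_⟩
          rcases Nat.lt_or_ge (s0.length + 2) (j + 1) with hh | hh
          · omega
          · exfalso
            exact hsh ⟨cc0, s0, by omega, rfl⟩
        · rintro ⟨hv, hl⟩
          refine ⟨⟨hv, by omega⟩, ?_⟩
          rintro ⟨cc', s', hlen, heq⟩
          have hcs : cc0 = cc' ∧ s0 = s' := by
            simp only [Option.some.injEq, Prod.mk.injEq] at heq
            exact ⟨heq.1, heq.2⟩
          obtain ⟨rfl, rfl⟩ := hcs
          omega
    rw [hdd]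

lemma descSet2_eq_Dsc {k : ℕ} (hk2 : 2 ≤ k) (x : Node2 → Pt) (γ : Fin 3) (s : List Bool) :
    descSet2 k x γ s = Dsc (k - 2) (xc x γ) s := by
  unfold descSet2 Dsc xc
  ext p
  constructor
  · rintro ⟨u, ⟨t, rfl, h1, h2, h3⟩, rfl⟩
    exact ⟨t, ⟨by omega, h2, h3⟩, rfl⟩
  · rintro ⟨t, ⟨h1, h2, h3⟩, rfl⟩
    exact ⟨some (γ, t), ⟨t, rfl, by omega, h2, h3⟩, rfl⟩

lemma barSet2_eq_Bar {k : ℕ} (hk2 : 2 ≤ k) (x : Node2 → Pt) (γ : Fin 3) (s : List Bool) :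
    barSet2 k x γ s = Bar (k - 2) (xc x γ) s := by
  unfold barSet2 Bar
  rw [descSet2_eq_Dsc hk2]
  rfl

lemma hInjc {X : Set Pt} {k : ℕ} {x : Node2 → Pt} (hL : IsLabeling2 k X x) (hk2 : 2 ≤ k)
    (γ : Fin 3) : Set.InjOn (xc x γ) {s : List Bool | 0 ≤ s.length ∧ s.length ≤ k - 2} := by
  intro s hs t ht heq
  have hs' : ValidNode2 k (some (γ, s)) := by
    show s.length + 2 ≤ k
    simp only [Set.mem_setOf_eq] at hs; omega
  have ht' : ValidNode2 k (some (γ, t)) := by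
    show t.length + 2 ≤ k
    simp only [Set.mem_setOf_eq] at ht; omega
  have := hL.1 hs' ht' heq
  simp only [Option.some.injEq, Prod.mk.injEq] at this
  exact this.2

lemma hsubc {X : Set Pt} {k : ℕ} {x : Node2 → Pt} (hL : IsLabeling2 k X x) (hk2 : 2 ≤ k)
    (γ : Fin 3) : ∀ s : List Bool, 0 ≤ s.length → s.length ≤ k - 2 → xc x γ s ∈ X := by
  intro s _ hs2
  rw [← hL.2]
  exact ⟨some (γ, s), (show s.length + 2 ≤ k by omega), rfl⟩

lemma hIntc {X : Set Pt} {k : ℕ} {x : Node2 → Pt} (hk2 : 2 ≤ k) (hI : InternalSep2 k X x)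
    (γ : Fin 3) {J : ℕ} (hJ : J + 2 ≤ k) :
    ∀ e : List Bool, e.length < J → ∀ y ∈ X \ Dsc (k - 2) (xc x γ) e,
      ∀ p ∈ Bar (k - 2) (xc x γ) (e ++ [false]), ∀ q ∈ Bar (k - 2) (xc x γ) (e ++ [true]),
        0 < orient p q y := by
  intro e he y hy p hp q hq
  rw [← descSet2_eq_Dsc hk2] at hy
  rw [← barSet2_eq_Bar hk2] at hp hq
  exact hI.1 γ e (by omega) y hy p hp q hq

lemma hExtc {X : Set Pt} {k : ℕ} {x : Node2 → Pt} (hk2 : 2 ≤ k) (hE : ExternalSep2 k X x)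
    (γ : Fin 3) {J : ℕ} (hJ : J + 2 ≤ k) :
    ∀ s : List Bool, 0 ≤ s.length → s.length < J → ∀ y ∈ X \ Bar (k - 2) (xc x γ) s,
      (∀ p ∈ Bar (k - 2) (xc x γ) (s ++ [false]), 0 < orient p (xc x γ s) y) ∧
      (∀ q ∈ Bar (k - 2) (xc x γ) (s ++ [true]), 0 < orient (xc x γ s) q y) := by
  intro s _ hs y hy
  rw [← barSet2_eq_Bar hk2] at hy
  have := hE γ s (by omega) y hy
  constructor
  · intro p hp
    rw [← barSet2_eq_Bar hk2] at hp
    exact this.1 p hp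
  · intro q hq
    rw [← barSet2_eq_Bar hk2] at hq
    exact this.2 q hq

lemma not_mem_Bar_xc {X : Set Pt} {k : ℕ} {x : Node2 → Pt} (hL : IsLabeling2 k X x)
    (hk2 : 2 ≤ k) {γ : Fin 3} {n : Node2} (hn : ValidNode2 k n)
    (hshape : ∀ t : List Bool, n ≠ some (γ, t)) {v : List Bool} (hv : v.length ≤ k - 2) :
    x n ∉ Bar (k - 2) (xc x γ) v := by
  intro hmem
  rcases hmem with heq | ⟨t, ⟨ht1, _, _⟩, heq⟩
  · exact hshape v (hL.1 hn (show v.length + 2 ≤ k by omega) heq)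
  · exact hshape t (hL.1 hn (show t.length + 2 ≤ k by omega) heq.symm)

lemma mem_barSet2_nil {k : ℕ} {x : Node2 → Pt} {γ : Fin 3} {s : List Bool}
    (h : s.length + 2 ≤ k) : x (some (γ, s)) ∈ barSet2 k x γ [] := by
  unfold barSet2
  rcases eq_or_ne s [] with rfl | hne
  · exact Set.mem_insert _ _
  · exact Set.mem_insert_of_mem _ ⟨some (γ, s), ⟨s, rfl, h, s.nil_prefix, Ne.symm hne⟩, rfl⟩

lemma not_mem_barSet2 {X : Set Pt} {k : ℕ} {x : Node2 → Pt} (hL : IsLabeling2 k X x)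
    (hk2 : 2 ≤ k) {γ : Fin 3} {n : Node2} (hn : ValidNode2 k n)
    (hshape : ∀ t : List Bool, n ≠ some (γ, t)) : x n ∉ barSet2 k x γ [] := by
  rw [barSet2_eq_Bar hk2]
  exact not_mem_Bar_xc hL hk2 hn hshape (by simp)

lemma fin3_cases (i j : Fin 3) (h : i ≠ j) : j = i + 1 ∨ j = i + 2 := by
  fin_cases i <;> fin_cases j <;> revert h <;> decide

lemma fin3_third (i j : Fin 3) (h1 : j ≠ i) (h2 : j ≠ i + 1) : j = i + 2 := by
  fin_cases i <;> fin_cases j <;> revert h1 h2 <;> decide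

lemma fin3_all (i δ : Fin 3) : δ = i ∨ δ = i + 1 ∨ δ = i + 2 := by
  fin_cases i <;> fin_cases δ <;> decide

lemma fin3_facts (i : Fin 3) : i + 1 ≠ i ∧ i + 2 ≠ i ∧ i + 2 ≠ i + 1 ∧
    i + 1 + 1 = i + 2 ∧ i + 2 + 1 = i := by
  fin_cases i <;> decide

end WRAP2


section WRAP3

variable {X : Set Pt} {k : ℕ} {x : Node2 → Pt}

lemma node_mem_X (hL : IsLabeling2 k X x) {n : Node2} (hn : ValidNode2 k n) : x n ∈ X := by
  rw [← hL.2]; exact ⟨n, hn, rfl⟩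

lemma caseI {j : ℕ} (hk2 : 2 ≤ k) (hj2 : 2 ≤ j) (hjk : j ≤ k)
    (hL : IsLabeling2 k X x) (hI : InternalSep2 k X x) (hE : ExternalSep2 k X x)
    (hSub : layerSub X k (j - 1) = x '' {u : Node2 | ValidNode2 k u ∧ NdLvl u ≤ j - 1})
    {γ : Fin 3} {s1 s2 s3 : List Bool}
    (hs1 : s1.length = j - 2) (hs2 : s2.length = j - 2) (hs3 : s3.length = j - 2)
    (h12 : s1 ≠ s2) (h13 : s1 ≠ s3) (h23 : s2 ≠ s3) :
    ∃! p : Pt, p ∈ layerSub X k (j - 1) ∩ interior (convexHull ℝ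
      ({x (some (γ, s1)), x (some (γ, s2)), x (some (γ, s3))} : Set Pt)) := by
  obtain ⟨r1, r2, r3, z, u, γb, hset, hu0, hu1, hz, hz3, hr1, hr2, hr3⟩ :=
    lca3 (j - 2) s1 s2 s3 hs1 hs2 hs3 h12 h13 h23
  have hTset : ({x (some (γ, s1)), x (some (γ, s2)), x (some (γ, s3))} : Set Pt)
      = {xc x γ r1, xc x γ r2, xc x γ r3} := by
    have e1 : ({x (some (γ, s1)), x (some (γ, s2)), x (some (γ, s3))} : Set Pt)
        = xc x γ '' {s1, s2, s3} := by simp [Set.image_insert_eq, xc]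
    have e2 : ({xc x γ r1, xc x γ r2, xc x γ r3} : Set Pt) = xc x γ '' {r1, r2, r3} := by
      simp [Set.image_insert_eq]
    rw [e1, e2, hset]
  rw [hTset]
  have hJk : (j - 2) + 2 ≤ k := by omega
  obtain ⟨hin, huniq, hcov⟩ := alpha_main (lo := 0) (hInjc hL hk2 γ) (by omega) (by omega)
    (hsubc hL hk2 γ) (hIntc hk2 hI γ hJk) (hExtc hk2 hE γ hJk) hr1 hr2 hr3 hu0 hu1 hz hz3
  have hulen : u.length + 1 ≤ j - 2 := by
    have := hu0.length_le; simp at this; omega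
  refine ⟨x (some (γ, u)), ⟨?_, hin⟩, ?_⟩
  · rw [hSub]
    exact ⟨some (γ, u), ⟨(show u.length + 2 ≤ k by omega), by simp; omega⟩, rfl⟩
  · rintro p ⟨hp1, hp2⟩
    rw [hSub] at hp1
    obtain ⟨n, ⟨hval, hlvl⟩, rfl⟩ := hp1
    rcases n with _ | ⟨δ, s⟩
    · exfalso
      obtain ⟨t, ⟨htM, -, -⟩, heq⟩ := hcov (x none) (node_mem_X hL trivial) hp2
      have hcon := hL.1 (show ValidNode2 k (some (γ, t)) from show t.length + 2 ≤ k by omega)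
        (show ValidNode2 k (none : Node2) from trivial) heq
      cases hcon
    · by_cases hδ : δ = γ
      · subst hδ
        have hws : s.length < j - 2 := by simp at hlvl; omega
        rw [huniq s (by omega) hws hp2]
      · exfalso
        obtain ⟨t, ⟨htM, -, -⟩, heq⟩ := hcov _ (node_mem_X hL hval) hp2
        have hcon := hL.1 (show ValidNode2 k (some (γ, t)) from show t.length + 2 ≤ k by omega)
          hval heq
        simp only [Option.some.injEq, Prod.mk.injEq] at hcon
        exact hδ hcon.1.symm

lemma caseII_core {j : ℕ} (hk2 : 2 ≤ k) (hj2 : 2 ≤ j) (hjk : j ≤ k)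
    (hL : IsLabeling2 k X x) (hI : InternalSep2 k X x) (hE : ExternalSep2 k X x)
    (hSub : layerSub X k (j - 1) = x '' {u : Node2 | ValidNode2 k u ∧ NdLvl u ≤ j - 1})
    {γ γ' : Fin 3} (hγ : γ' ≠ γ) {t1 t2 sR d : List Bool}
    (ht1 : t1.length = j - 2) (ht2 : t2.length = j - 2) (htR : sR.length = j - 2)
    (hd1 : d ++ [false] <+: t1) (hd2 : d ++ [true] <+: t2) :
    ∃! p : Pt, p ∈ layerSub X k (j - 1) ∩ interior (convexHull ℝ
      ({x (some (γ, t1)), x (some (γ, t2)), x (some (γ', sR))} : Set Pt)) := by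
  have hJk : (j - 2) + 2 ≤ k := by omega
  have hvR : ValidNode2 k (some (γ', sR)) := show sR.length + 2 ≤ k by omega
  have hv1 : ValidNode2 k (some (γ, t1)) := show t1.length + 2 ≤ k by omega
  have hv2 : ValidNode2 k (some (γ, t2)) := show t2.length + 2 ≤ k by omega
  have hCX : x (some (γ', sR)) ∈ X := node_mem_X hL hvR
  have hshapeR : ∀ t : List Bool, (some (γ', sR) : Node2) ≠ some (γ, t) := by
    intro t hcon
    simp only [Option.some.injEq, Prod.mk.injEq] at hcon
    exact hγ hcon.1
  have hcBar : ∀ v : List Bool, v.length ≤ k - 2 →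
      x (some (γ', sR)) ∉ Bar (k - 2) (xc x γ) v :=
    fun v hv => not_mem_Bar_xc hL hk2 hvR hshapeR hv
  obtain ⟨hO, hin, huniq⟩ := beta_main (lo := 0) (hInjc hL hk2 γ) (by omega) (by omega)
    (hsubc hL hk2 γ) (hIntc hk2 hI γ hJk) (hExtc hk2 hE γ hJk) ht1 ht2 hd1 hd2 (by omega)
    hCX hcBar
  have hdlen : d.length + 1 ≤ j - 2 := by
    have := hd1.length_le; simp at this; omega
  refine ⟨x (some (γ, d)), ⟨?_, hin⟩, ?_⟩
  · rw [hSub]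
    exact ⟨some (γ, d), ⟨(show d.length + 2 ≤ k by omega), by simp; omega⟩, rfl⟩
  · rintro p ⟨hp1, hp2⟩
    rw [hSub] at hp1
    obtain ⟨n, ⟨hval, hlvl⟩, rfl⟩ := hp1
    obtain ⟨h1, h2, h3⟩ := (mem_interior_triangle hO).mp hp2
    simp only [xc] at h1 h2 h3
    have hA : x (some (γ, t1)) ∈ barSet2 k x γ [] := mem_barSet2_nil (by omega)
    have hB : x (some (γ, t2)) ∈ barSet2 k x γ [] := mem_barSet2_nil (by omega)
    have hC : x (some (γ', sR)) ∈ barSet2 k x γ' [] := mem_barSet2_nil (by omega)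
    have hkill : x n ∉ barSet2 k x γ [] → x n ∉ barSet2 k x γ' [] → False := by
      intro hB1 hB2
      have hX' : x n ∈ X := node_mem_X hL hval
      rcases fin3_cases γ γ' (Ne.symm hγ) with hcase | hcase
      · have hk' := hI.2 γ (x n)
          ⟨hX', by rintro (h | h); exact hB1 h; exact hB2 (by rw [hcase]; exact h)⟩
          (x (some (γ, t1))) hA (x (some (γ', sR))) (by subst hcase; exact hC)
        have heq : orient (x (some (γ, t1))) (x (some (γ', sR))) (x n)
            = -orient (x (some (γ', sR))) (x (some (γ, t1))) (x n) := orient_swap12 _ _ _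
        linarith
      · have hγ1 : γ' + 1 = γ := by
          rw [hcase]
          exact (fin3_facts γ).2.2.2.2
        have hk' := hI.2 γ' (x n)
          ⟨hX', by rintro (h | h); exact hB2 h; exact hB1 (by rw [hγ1] at h; exact h)⟩
          (x (some (γ', sR))) hC (x (some (γ, t2))) (by rw [hγ1]; exact hB)
        have heq : orient (x (some (γ', sR))) (x (some (γ, t2))) (x n)
            = -orient (x (some (γ, t2))) (x (some (γ', sR))) (x n) := orient_swap12 _ _ _
        linarith
    rcases n with _ | ⟨δ, s⟩
    · exact (hkill (not_mem_barSet2 hL hk2 trivial (fun t => by simp))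
        (not_mem_barSet2 hL hk2 trivial (fun t => by simp))).elim
    · have hws : s.length < j - 2 := by simp at hlvl; omega
      by_cases hδ1 : δ = γ
      · subst hδ1
        rw [huniq s (by omega) hws hp2]
      · exfalso
        by_cases hδ2 : δ = γ'
        · subst hδ2
          refine gamma_kill (lo := 0) (hInjc hL hk2 δ) (by omega) (by omega)
            (hsubc hL hk2 δ) (hIntc hk2 hI δ hJk) (hExtc hk2 hE δ hJk) htR sR.nil_prefix
            (node_mem_X hL hv1) (node_mem_X hL hv2) ?_ ?_ s.nil_prefix (by omega) hws
            h3 h1 h2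
          · intro v _ hv
            exact not_mem_Bar_xc hL hk2 hv1 (by
              intro t hcon
              simp only [Option.some.injEq, Prod.mk.injEq] at hcon
              exact hγ hcon.1.symm) hv
          · intro v _ hv
            exact not_mem_Bar_xc hL hk2 hv2 (by
              intro t hcon
              simp only [Option.some.injEq, Prod.mk.injEq] at hcon
              exact hγ hcon.1.symm) hv
        · refine hkill (not_mem_barSet2 hL hk2 hval ?_) (not_mem_barSet2 hL hk2 hval ?_)
          · intro t hcon
            simp only [Option.some.injEq, Prod.mk.injEq] at hcon
            exact hδ1 hcon.1
          · intro t hcon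
            simp only [Option.some.injEq, Prod.mk.injEq] at hcon
            exact hδ2 hcon.1

lemma caseII {j : ℕ} (hk2 : 2 ≤ k) (hj2 : 2 ≤ j) (hjk : j ≤ k)
    (hL : IsLabeling2 k X x) (hI : InternalSep2 k X x) (hE : ExternalSep2 k X x)
    (hSub : layerSub X k (j - 1) = x '' {u : Node2 | ValidNode2 k u ∧ NdLvl u ≤ j - 1})
    {γ γ' : Fin 3} (hγ : γ' ≠ γ) {sP sQ sR : List Bool}
    (hsP : sP.length = j - 2) (hsQ : sQ.length = j - 2) (hsR : sR.length = j - 2)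
    (hPQ : sP ≠ sQ) :
    ∃! p : Pt, p ∈ layerSub X k (j - 1) ∩ interior (convexHull ℝ
      ({x (some (γ, sP)), x (some (γ, sQ)), x (some (γ', sR))} : Set Pt)) := by
  obtain ⟨d, β, hd1, hd2⟩ := lca_pair sP sQ (by omega) hPQ
  cases β
  · exact caseII_core hk2 hj2 hjk hL hI hE hSub hγ hsP hsQ hsR hd1 (by simpa using hd2)
  · rw [set3_12 (x (some (γ, sP))) (x (some (γ, sQ))) (x (some (γ', sR)))]
    exact caseII_core hk2 hj2 hjk hL hI hE hSub hγ hsQ hsP hsR (by simpa using hd2) hd1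

lemma caseIII {j : ℕ} (hk2 : 2 ≤ k) (hj2 : 2 ≤ j) (hjk : j ≤ k)
    (hL : IsLabeling2 k X x) (hI : InternalSep2 k X x) (hE : ExternalSep2 k X x)
    (hSub : layerSub X k (j - 1) = x '' {u : Node2 | ValidNode2 k u ∧ NdLvl u ≤ j - 1})
    {γ : Fin 3} {sA sB sC : List Bool}
    (hsA : sA.length = j - 2) (hsB : sB.length = j - 2) (hsC : sC.length = j - 2) :
    ∃! p : Pt, p ∈ layerSub X k (j - 1) ∩ interior (convexHull ℝ
      ({x (some (γ, sA)), x (some (γ + 1, sB)), x (some (γ + 2, sC))} : Set Pt)) := by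
  have hJk : (j - 2) + 2 ≤ k := by omega
  obtain ⟨hne1, hne2, hne3, hadd1, hadd2⟩ := fin3_facts γ
  have hvA : ValidNode2 k (some (γ, sA)) := show sA.length + 2 ≤ k by omega
  have hvB : ValidNode2 k (some (γ + 1, sB)) := show sB.length + 2 ≤ k by omega
  have hvC : ValidNode2 k (some (γ + 2, sC)) := show sC.length + 2 ≤ k by omega
  set A := x (some (γ, sA)) with hAdef
  set B := x (some (γ + 1, sB)) with hBdef
  set C := x (some (γ + 2, sC)) with hCdef
  have hmA : A ∈ barSet2 k x γ [] := mem_barSet2_nil (by omega)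
  have hmB : B ∈ barSet2 k x (γ + 1) [] := mem_barSet2_nil (by omega)
  have hmC : C ∈ barSet2 k x (γ + 2) [] := mem_barSet2_nil (by omega)
  have hshape : ∀ (δ δ' : Fin 3) (s : List Bool), δ ≠ δ' →
      (∀ t : List Bool, (some (δ, s) : Node2) ≠ some (δ', t)) := by
    intro δ δ' s hne t hcon
    simp only [Option.some.injEq, Prod.mk.injEq] at hcon
    exact hne hcon.1
  -- orientations of the three triangle points via part (ii)
  have hO : 0 < orient A B C :=
    hI.2 γ C ⟨node_mem_X hL hvC, by
      rintro (h | h)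
      · exact not_mem_barSet2 hL hk2 hvC (hshape _ _ _ hne2) h
      · exact not_mem_barSet2 hL hk2 hvC (hshape _ _ _ hne3) h⟩ A hmA B hmB
  have hrootX : x none ∈ X := node_mem_X hL trivial
  have hrootnB : ∀ δ : Fin 3, x none ∉ barSet2 k x δ [] := fun δ =>
    not_mem_barSet2 hL hk2 trivial (fun t => by simp)
  have o1 : 0 < orient A B (x none) :=
    hI.2 γ (x none) ⟨hrootX, by rintro (h | h) <;> exact hrootnB _ h⟩ A hmA B hmB
  have o2 : 0 < orient B C (x none) :=
    hI.2 (γ + 1) (x none) ⟨hrootX, by rintro (h | h) <;> exact hrootnB _ h⟩ B hmB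
      C (by rw [hadd1]; exact hmC)
  have o3 : 0 < orient C A (x none) :=
    hI.2 (γ + 2) (x none) ⟨hrootX, by rintro (h | h) <;> exact hrootnB _ h⟩ C hmC
      A (by rw [hadd2]; exact hmA)
  refine ⟨x none, ⟨?_, (mem_interior_triangle hO).mpr ⟨o1, o2, o3⟩⟩, ?_⟩
  · rw [hSub]
    exact ⟨none, ⟨trivial, by simp; omega⟩, rfl⟩
  · rintro p ⟨hp1, hp2⟩
    rw [hSub] at hp1
    obtain ⟨n, ⟨hval, hlvl⟩, rfl⟩ := hp1
    obtain ⟨h1, h2, h3⟩ := (mem_interior_triangle hO).mp hp2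
    rcases n with _ | ⟨δ, s⟩
    · rfl
    · exfalso
      have hws : s.length < j - 2 := by simp at hlvl; omega
      rcases fin3_all γ δ with rfl | rfl | rfl
      · refine gamma_kill (lo := 0) (hInjc hL hk2 δ) (by omega) (by omega)
          (hsubc hL hk2 δ) (hIntc hk2 hI δ hJk) (hExtc hk2 hE δ hJk) hsA sA.nil_prefix
          (node_mem_X hL hvB) (node_mem_X hL hvC) ?_ ?_ s.nil_prefix (by omega) hws
          h1 h2 h3
        · exact fun v _ hv => not_mem_Bar_xc hL hk2 hvB (hshape _ _ _ hne1) hv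
        · exact fun v _ hv => not_mem_Bar_xc hL hk2 hvC (hshape _ _ _ hne2) hv
      · refine gamma_kill (lo := 0) (hInjc hL hk2 (γ + 1)) (by omega) (by omega)
          (hsubc hL hk2 (γ + 1)) (hIntc hk2 hI (γ + 1) hJk) (hExtc hk2 hE (γ + 1) hJk)
          hsB sB.nil_prefix
          (node_mem_X hL hvC) (node_mem_X hL hvA) ?_ ?_ s.nil_prefix (by omega) hws
          h2 h3 h1
        · exact fun v _ hv => not_mem_Bar_xc hL hk2 hvC (hshape _ _ _ hne3) hv
        · exact fun v _ hv => not_mem_Bar_xc hL hk2 hvA (hshape _ _ _ (Ne.symm hne1)) hv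
      · refine gamma_kill (lo := 0) (hInjc hL hk2 (γ + 2)) (by omega) (by omega)
          (hsubc hL hk2 (γ + 2)) (hIntc hk2 hI (γ + 2) hJk) (hExtc hk2 hE (γ + 2) hJk)
          hsC sC.nil_prefix
          (node_mem_X hL hvA) (node_mem_X hL hvB) ?_ ?_ s.nil_prefix (by omega) hws
          h3 h1 h2
        · exact fun v _ hv => not_mem_Bar_xc hL hk2 hvA (hshape _ _ _ (Ne.symm hne2)) hv
        · exact fun v _ hv => not_mem_Bar_xc hL hk2 hvB (hshape _ _ _ (Ne.symm hne3)) hv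

lemma nacs2 {X : Set Pt} {k : ℕ} {x : Node2 → Pt}
    (hfin : X.Finite) (hne : X.Nonempty) (hgp : GenPos X) (hk : HasLayers X k)
    (hL : IsLabeling2 k X x) (hN : Nested2 k X x)
    (hI : InternalSep2 k X x) (hE : ExternalSep2 k X x) : IsNACS X := by
  refine ⟨hfin, hne, hgp, ?_⟩
  intro k' hk'
  obtain rfl : k = k' := hasLayers_unique hk hk'
  intro j hj1 hjk a ha b hb c hc hab hac hbc
  have hj2 : 2 ≤ j := by
    by_contra hcon
    have hj1' : j = 1 := by omega
    subst hj1'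
    rw [layer2_1 hN] at ha hb
    exact hab (ha.trans hb.symm)
  have hk2 : 2 ≤ k := by omega
  have hlay := layer2_eq hN hj2 hjk
  rw [hlay] at ha hb hc
  obtain ⟨n1, ⟨c1, s1, hs1, rfl⟩, rfl⟩ := ha
  obtain ⟨n2, ⟨c2, s2, hs2, rfl⟩, rfl⟩ := hb
  obtain ⟨n3, ⟨c3, s3, hs3, rfl⟩, rfl⟩ := hc
  have hSub : layerSub X k (j - 1) = x '' {u : Node2 | ValidNode2 k u ∧ NdLvl u ≤ j - 1} :=
    layerSub2_eq hL hN (k - (j - 1)) (j - 1) (by omega) (by omega)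
  have hn12 : (c1, s1) ≠ (c2, s2) := by
    intro hcon; exact hab (by rw [hcon])
  have hn13 : (c1, s1) ≠ (c3, s3) := by
    intro hcon; exact hac (by rw [hcon])
  have hn23 : (c2, s2) ≠ (c3, s3) := by
    intro hcon; exact hbc (by rw [hcon])
  by_cases hc12 : c1 = c2
  · by_cases hc13 : c1 = c3
    · -- all same colour
      subst hc12; subst hc13
      have h12 : s1 ≠ s2 := fun h => hn12 (by rw [h])
      have h13 : s1 ≠ s3 := fun h => hn13 (by rw [h])
      have h23 : s2 ≠ s3 := fun h => hn23 (by rw [h])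
      exact caseI hk2 hj2 hjk hL hI hE hSub hs1 hs2 hs3 h12 h13 h23
    · -- pair (1,2), loner 3
      subst hc12
      have h12 : s1 ≠ s2 := fun h => hn12 (by rw [h])
      exact caseII hk2 hj2 hjk hL hI hE hSub (Ne.symm hc13) hs1 hs2 hs3 h12
  · by_cases hc13 : c1 = c3
    · -- pair (1,3), loner 2
      subst hc13
      have h13 : s1 ≠ s3 := fun h => hn13 (by rw [h])
      rw [set3_23 (x (some (c1, s1))) (x (some (c2, s2))) (x (some (c1, s3)))]
      exact caseII hk2 hj2 hjk hL hI hE hSub (Ne.symm hc12) hs1 hs3 hs2 h13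
    · by_cases hc23 : c2 = c3
      · -- pair (2,3), loner 1
        subst hc23
        have h23 : s2 ≠ s3 := fun h => hn23 (by rw [h])
        rw [(set3_12 (x (some (c1, s1))) (x (some (c2, s2))) (x (some (c2, s3)))).trans
          (set3_23 (x (some (c2, s2))) (x (some (c1, s1))) (x (some (c2, s3))))]
        exact caseII hk2 hj2 hjk hL hI hE hSub hc12 hs2 hs3 hs1 h23
      · -- all colours distinct
        rcases fin3_cases c1 c2 hc12 with hcase | hcase
        · have hc3 : c3 = c1 + 2 :=
            fin3_third c1 c3 (Ne.symm hc13) (hcase ▸ (Ne.symm hc23))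
          subst hcase
          subst hc3
          exact caseIII hk2 hj2 hjk hL hI hE hSub hs1 hs2 hs3
        · have hc3 : c3 = c1 + 1 := by
            rcases fin3_cases c1 c3 hc13 with h | h
            · exact h
            · exact absurd (h.trans hcase.symm) (Ne.symm hc23)
          subst hcase
          subst hc3
          rw [set3_23 (x (some (c1, s1))) (x (some (c1 + 2, s2))) (x (some (c1 + 1, s3)))]
          exact caseIII hk2 hj2 hjk hL hI hE hSub hs1 hs3 hs2

end WRAP3


/-- (Theorem 2, (3) ⇒ (1).) A finite set in general position with exactly
`k` convex layers admitting a nested labeling that is both an internal and an external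
separation is a nested almost convex set. -/
theorem labeling_sep_implies_nacs (X : Set Pt) (k : ℕ)
    (hfin : X.Finite) (hne : X.Nonempty) (hgp : GenPos X) (hk : HasLayers X k)
    (h : (∃ x : List Bool → Pt,
            IsLabeling1 k X x ∧ Nested1 k X x ∧ InternalSep1 k X x ∧ ExternalSep1 k X x) ∨
         (∃ x : Node2 → Pt,
            IsLabeling2 k X x ∧ Nested2 k X x ∧ InternalSep2 k X x ∧ ExternalSep2 k X x)) :
    IsNACS X := by
  rcases h with ⟨x, hL, hN, hI, hE⟩ | ⟨x, hL, hN, hI, hE⟩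
  · exact nacs1 hfin hne hgp hk hL hN hI hE
  · exact nacs2 hfin hne hgp hk hL hN hI hE
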